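/- arXiv:1901.08650 — 3 statements merged into one kernel-verified Lean document; each statement's English description precedes it below -/
import Mathlib

section
/- Let P₁ and P₂ be solutions of the PRE on (−∞, t_f] with final values P₁(t_f) = G₁ and P₂(t_f) = G₂, where G₁, G₂ are symmetric positive semidefinite and G₁ ≤ G₂ in the Loewner order. Then P₁(t) ≤ P₂(t) in the Loewner order for all t ≤ t_f. (Paper's Lemma 3: P(t; t_f, G₁) ≤ P(t; t_f, G₂).) -/
open Matrix Filter Topology

/-- Frobenius norm of a real square matrix. -/
noncomputable def frobNorm {n : ℕ} (X : Matrix (Fin n) (Fin n) ℝ) : ℝ :=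
  Real.sqrt (∑ i, ∑ j, (X i j) ^ 2)

/-- `P` is a solution of the periodic Riccati equation
`−P'(t) = A(t)ᵀ P(t) + P(t) A(t) − P(t) B(t) R(t)⁻¹ B(t)ᵀ P(t) + C(t)ᵀ C(t)`
on the set `S` (entrywise derivative). -/
def IsPRESolOn {n m r : ℕ} (A : ℝ → Matrix (Fin n) (Fin n) ℝ)
    (B : ℝ → Matrix (Fin n) (Fin m) ℝ) (C : ℝ → Matrix (Fin r) (Fin n) ℝ)
    (R : ℝ → Matrix (Fin m) (Fin m) ℝ) (P : ℝ → Matrix (Fin n) (Fin n) ℝ)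
    (S : Set ℝ) : Prop :=
  ∀ t ∈ S, ∀ i j, HasDerivAt (fun τ => P τ i j)
    ((-((A t)ᵀ * P t + P t * A t - P t * B t * (R t)⁻¹ * (B t)ᵀ * P t + (C t)ᵀ * C t)) i j) t

/-! ### Auxiliary lemmas -/

lemma sq_le_dot {n : ℕ} (x : Fin n → ℝ) (i : Fin n) : x i * x i ≤ x ⬝ᵥ x :=
  Finset.single_le_sum (fun j _ => mul_self_nonneg (x j)) (Finset.mem_univ i)

lemma dot_self_pos' {n : ℕ} {x : Fin n → ℝ} (hx : x ≠ 0) : 0 < x ⬝ᵥ x := by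
  rcases Function.ne_iff.1 hx with ⟨i, hi⟩
  have h0 : x i ≠ 0 := by simpa using hi
  exact (mul_self_pos.mpr h0).trans_le (sq_le_dot x i)

lemma abs_mul_le_dot {n : ℕ} (x : Fin n → ℝ) (i j : Fin n) : |x i * x j| ≤ x ⬝ᵥ x := by
  have h1 := sq_le_dot x i
  have h2 := sq_le_dot x j
  rw [abs_mul]
  nlinarith [abs_nonneg (x i), abs_nonneg (x j), sq_nonneg (|x i| - |x j|), sq_abs (x i),
    sq_abs (x j)]

lemma quad_expand {n : ℕ} (M : Matrix (Fin n) (Fin n) ℝ) (x : Fin n → ℝ) :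
    x ⬝ᵥ M *ᵥ x = ∑ i, ∑ j, x i * (M i j * x j) := by
  simp [dotProduct, Matrix.mulVec, Finset.mul_sum]

lemma quad_abs_le {n : ℕ} (M : Matrix (Fin n) (Fin n) ℝ) (x : Fin n → ℝ) :
    |x ⬝ᵥ M *ᵥ x| ≤ (∑ i, ∑ j, |M i j|) * (x ⬝ᵥ x) := by
  rw [quad_expand, Finset.sum_mul]
  refine (Finset.abs_sum_le_sum_abs _ _).trans (Finset.sum_le_sum fun i _ => ?_)
  rw [Finset.sum_mul]
  refine (Finset.abs_sum_le_sum_abs _ _).trans (Finset.sum_le_sum fun j _ => ?_)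
  calc |x i * (M i j * x j)| = |M i j| * |x i * x j| := by rw [← abs_mul]; ring_nf
    _ ≤ |M i j| * (x ⬝ᵥ x) := mul_le_mul_of_nonneg_left (abs_mul_le_dot x i j) (abs_nonneg _)

lemma quad_smul {n : ℕ} (M : Matrix (Fin n) (Fin n) ℝ) (x : Fin n → ℝ) (c : ℝ) :
    (c • x) ⬝ᵥ M *ᵥ (c • x) = c^2 * (x ⬝ᵥ M *ᵥ x) := by
  rw [Matrix.mulVec_smul, smul_dotProduct, dotProduct_smul]
  simp [smul_eq_mul]; ring

lemma quad_pos_of_unit {n : ℕ} {M : Matrix (Fin n) (Fin n) ℝ}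
    (h : ∀ x : Fin n → ℝ, x ⬝ᵥ x = 1 → 0 < x ⬝ᵥ M *ᵥ x) {y : Fin n → ℝ} (hy : y ≠ 0) :
    0 < y ⬝ᵥ M *ᵥ y := by
  have hyy := dot_self_pos' hy
  set c : ℝ := Real.sqrt (y ⬝ᵥ y) with hc
  have hcpos : 0 < c := Real.sqrt_pos.mpr hyy
  have hcsq : c^2 = y ⬝ᵥ y := Real.sq_sqrt hyy.le
  have hunit : (c⁻¹ • y) ⬝ᵥ (c⁻¹ • y) = 1 := by
    rw [smul_dotProduct, dotProduct_smul, smul_eq_mul, smul_eq_mul, ← hcsq]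
    field_simp
  have := h _ hunit
  rw [quad_smul] at this
  nlinarith

lemma deriv_nonneg_right (g : ℝ → ℝ) (d t₀ b : ℝ) (hlt : t₀ < b)
    (hg : HasDerivAt g d t₀) (h0 : g t₀ = 0) (hpos : ∀ s ∈ Set.Ioc t₀ b, 0 ≤ g s) : 0 ≤ d := by
  have h1 : Tendsto (slope g t₀) (𝓝[>] t₀) (𝓝 d) :=
    (hasDerivAt_iff_tendsto_slope.mp hg).mono_left
      (nhdsWithin_mono _ fun y hy => Set.mem_compl_singleton_iff.mpr (LT.lt.ne' hy))
  refine ge_of_tendsto h1 ?_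
  filter_upwards [Ioc_mem_nhdsGT_of_mem (Set.mem_Ico.mpr ⟨le_rfl, hlt⟩)] with s hs
  rw [slope_def_field, h0, sub_zero]
  exact div_nonneg (hpos s hs) (sub_nonneg.mpr hs.1.le)

lemma key_quad {n : ℕ} (a s p₁ p₂ : Matrix (Fin n) (Fin n) ℝ) (x : Fin n → ℝ) (c : ℝ)
    (hsym : (p₂ - p₁)ᵀ = p₂ - p₁) (hker : (p₂ - p₁) *ᵥ x = (-c) • x) :
    x ⬝ᵥ (-(aᵀ * (p₂ - p₁)) - (p₂ - p₁) * a + p₂ * s * (p₂ - p₁) + (p₂ - p₁) * (s * p₁)) *ᵥ x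
      = c * (x ⬝ᵥ (a + aᵀ - p₂ * s - s * p₁) *ᵥ x) := by
  set Δ := p₂ - p₁ with hΔ
  have hvm : x ᵥ* Δ = (-c) • x := by
    rw [← hsym, Matrix.vecMul_transpose, hker]
  have t1 : x ⬝ᵥ (aᵀ * Δ) *ᵥ x = -c * (x ⬝ᵥ aᵀ *ᵥ x) := by
    rw [← Matrix.mulVec_mulVec, hker, Matrix.mulVec_smul, dotProduct_smul]
    simp [smul_eq_mul]
  have t2 : x ⬝ᵥ (Δ * a) *ᵥ x = -c * (x ⬝ᵥ a *ᵥ x) := by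
    rw [← Matrix.mulVec_mulVec, Matrix.dotProduct_mulVec, hvm, smul_dotProduct,
      Matrix.dotProduct_mulVec]
    simp [smul_eq_mul]
  have t3 : x ⬝ᵥ (p₂ * s * Δ) *ᵥ x = -c * (x ⬝ᵥ (p₂ * s) *ᵥ x) := by
    rw [← Matrix.mulVec_mulVec, hker, Matrix.mulVec_smul, dotProduct_smul]
    simp [smul_eq_mul]
  have t4 : x ⬝ᵥ (Δ * (s * p₁)) *ᵥ x = -c * (x ⬝ᵥ (s * p₁) *ᵥ x) := by
    rw [← Matrix.mulVec_mulVec, Matrix.dotProduct_mulVec, hvm, smul_dotProduct,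
      Matrix.dotProduct_mulVec]
    simp [smul_eq_mul]
  simp only [Matrix.add_mulVec, Matrix.sub_mulVec, Matrix.neg_mulVec, dotProduct_add,
    dotProduct_sub, dotProduct_neg] at *
  linarith [t1, t2, t3, t4]

lemma frob_mul_le {n : ℕ} (G E : Matrix (Fin n) (Fin n) ℝ) :
    ∑ i, ∑ j, ((G * E) i j)^2 ≤ (∑ i, ∑ j, (G i j)^2) * (∑ i, ∑ j, (E i j)^2) := by
  have key : ∀ i j, ((G * E) i j)^2 ≤ (∑ k, (G i k)^2) * (∑ k, (E k j)^2) := fun i j => by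
    rw [Matrix.mul_apply]; exact Finset.sum_mul_sq_le_sq_mul_sq _ _ _
  calc ∑ i, ∑ j, ((G * E) i j)^2 ≤ ∑ i, ∑ j, (∑ k, (G i k)^2) * (∑ k, (E k j)^2) :=
        Finset.sum_le_sum fun i _ => Finset.sum_le_sum fun j _ => key i j
    _ = (∑ i, ∑ k, (G i k)^2) * (∑ j, ∑ k, (E k j)^2) := by rw [Finset.sum_mul_sum]
    _ = (∑ i, ∑ j, (G i j)^2) * (∑ i, ∑ j, (E i j)^2) := by
        rw [Finset.sum_comm (s := Finset.univ) (t := Finset.univ) (f := fun j k => (E k j)^2)]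

lemma cont_inv {m : ℕ} (R : ℝ → Matrix (Fin m) (Fin m) ℝ) (hR : Continuous R)
    (hRpos : ∀ t, (R t).PosDef) : Continuous fun t => (R t)⁻¹ := by
  have hdet : Continuous fun t => (R t).det := hR.matrix_det
  have hne : ∀ t, (R t).det ≠ 0 := fun t => (hRpos t).det_pos.ne'
  have h2 : Continuous fun t => (R t).adjugate := hR.matrix_adjugate
  have : (fun t => (R t)⁻¹) = fun t => ((R t).det)⁻¹ • (R t).adjugate := by
    funext t; rw [Matrix.inv_def, Ring.inverse_eq_inv]
  rw [this]; exact (hdet.inv₀ hne).smul h2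

section Sym

variable {n m r : ℕ} (A : ℝ → Matrix (Fin n) (Fin n) ℝ) (B : ℝ → Matrix (Fin n) (Fin m) ℝ)
    (C : ℝ → Matrix (Fin r) (Fin n) ℝ) (R : ℝ → Matrix (Fin m) (Fin m) ℝ)

/-- The matrix `B R⁻¹ Bᵀ`. -/
noncomputable def Sm (τ : ℝ) : Matrix (Fin n) (Fin n) ℝ := B τ * (R τ)⁻¹ * (B τ)ᵀ

/-- The Riccati right-hand side. -/
noncomputable def Dm (P : ℝ → Matrix (Fin n) (Fin n) ℝ) (τ : ℝ) : Matrix (Fin n) (Fin n) ℝ :=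
  -((A τ)ᵀ * P τ + P τ * A τ - P τ * B τ * (R τ)⁻¹ * (B τ)ᵀ * P τ + (C τ)ᵀ * C τ)

lemma Sm_symm (hRpos : ∀ t, (R t).PosDef) (τ : ℝ) : (Sm B R τ)ᵀ = Sm B R τ := by
  have hR : (R τ)ᵀ = R τ := by
    have := (hRpos τ).isHermitian
    rwa [Matrix.IsHermitian, Matrix.conjTranspose_eq_transpose_of_trivial] at this
  simp [Sm, Matrix.transpose_mul, Matrix.transpose_nonsing_inv, hR, Matrix.mul_assoc]

lemma Dm_sub_transpose (hRpos : ∀ t, (R t).PosDef) (P : ℝ → Matrix (Fin n) (Fin n) ℝ) (τ : ℝ) :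
    Dm A B C R P τ - (Dm A B C R P τ)ᵀ =
      (P τ * Sm B R τ - (A τ)ᵀ) * (P τ - (P τ)ᵀ) + (P τ - (P τ)ᵀ) * (Sm B R τ * (P τ)ᵀ - A τ) := by
  have hS := Sm_symm B R hRpos τ
  have hPS : P τ * B τ * (R τ)⁻¹ * (B τ)ᵀ * P τ = P τ * Sm B R τ * P τ := by
    simp [Sm, Matrix.mul_assoc]
  unfold Dm
  rw [hPS]
  set p := P τ; set a := A τ; set s := Sm B R τ; set c := C τ
  have ht : (aᵀ * p + p * a - p * s * p + cᵀ * c)ᵀ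
      = pᵀ * a + aᵀ * pᵀ - pᵀ * s * pᵀ + cᵀ * c := by
    simp [Matrix.transpose_add, Matrix.transpose_sub, Matrix.transpose_mul, hS, Matrix.mul_assoc]
  rw [Matrix.transpose_neg, ht]
  noncomm_ring

lemma Dm_diff (P₁ P₂ : ℝ → Matrix (Fin n) (Fin n) ℝ) (τ : ℝ) :
    Dm A B C R P₂ τ - Dm A B C R P₁ τ =
      -((A τ)ᵀ * (P₂ τ - P₁ τ)) - (P₂ τ - P₁ τ) * A τ
        + P₂ τ * Sm B R τ * (P₂ τ - P₁ τ) + (P₂ τ - P₁ τ) * (Sm B R τ * P₁ τ) := by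
  have h2 : P₂ τ * B τ * (R τ)⁻¹ * (B τ)ᵀ * P₂ τ = P₂ τ * Sm B R τ * P₂ τ := by
    simp [Sm, Matrix.mul_assoc]
  have h1 : P₁ τ * B τ * (R τ)⁻¹ * (B τ)ᵀ * P₁ τ = P₁ τ * Sm B R τ * P₁ τ := by
    simp [Sm, Matrix.mul_assoc]
  unfold Dm
  rw [h1, h2]
  noncomm_ring

end Sym

lemma gronwall_zero (u u' : ℝ → ℝ) (t' tf L : ℝ) (ht' : t' ≤ tf)
    (hu : ∀ τ ∈ Set.Icc t' tf, HasDerivAt u (u' τ) τ)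
    (hnn : ∀ τ ∈ Set.Icc t' tf, 0 ≤ u τ) (hend : u tf = 0)
    (hkey : ∀ τ ∈ Set.Icc t' tf, 0 ≤ L * u τ + u' τ) : u t' = 0 := by
  have hmem : t' ∈ Set.Icc t' tf := ⟨le_rfl, ht'⟩
  have hmem' : tf ∈ Set.Icc t' tf := ⟨ht', le_rfl⟩
  have hv : ∀ τ ∈ Set.Icc t' tf,
      HasDerivAt (fun s => Real.exp (L * s) * u s) (Real.exp (L * τ) * (L * u τ + u' τ)) τ := by
    intro τ hτ
    have he : HasDerivAt (fun s : ℝ => Real.exp (L * s)) (Real.exp (L * τ) * L) τ := by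
      simpa using ((hasDerivAt_id τ).const_mul L).exp
    have := he.fun_mul (hu τ hτ)
    exact this.congr_deriv (by ring)
  have hvmono : MonotoneOn (fun s => Real.exp (L * s) * u s) (Set.Icc t' tf) := by
    apply monotoneOn_of_deriv_nonneg (convex_Icc _ _)
    · exact fun τ hτ => ((hv τ hτ).continuousAt).continuousWithinAt
    · intro τ hτ
      rw [interior_Icc] at hτ
      exact ((hv τ (Set.mem_Icc_of_Ioo hτ)).differentiableAt).differentiableWithinAt
    · intro τ hτ
      rw [interior_Icc] at hτ
      rw [(hv τ (Set.mem_Icc_of_Ioo hτ)).deriv]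
      exact mul_nonneg (Real.exp_pos _).le (hkey τ (Set.mem_Icc_of_Ioo hτ))
  have h1 : Real.exp (L * t') * u t' ≤ Real.exp (L * tf) * u tf := hvmono hmem hmem' ht'
  rw [hend, mul_zero] at h1
  have h2 : 0 ≤ u t' := hnn t' hmem
  nlinarith [Real.exp_pos (L * t')]

lemma sym_PRE {n m r : ℕ} {A : ℝ → Matrix (Fin n) (Fin n) ℝ} {B : ℝ → Matrix (Fin n) (Fin m) ℝ}
    {C : ℝ → Matrix (Fin r) (Fin n) ℝ} {R : ℝ → Matrix (Fin m) (Fin m) ℝ}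
    (hA : Continuous A) (hB : Continuous B) (hR : Continuous R)
    (hRpos : ∀ t, (R t).PosDef) {tf : ℝ} {P : ℝ → Matrix (Fin n) (Fin n) ℝ}
    (hP : IsPRESolOn A B C R P (Set.Iic tf)) (hPf : (P tf)ᵀ = P tf)
    {t' : ℝ} (ht' : t' ≤ tf) : (P t')ᵀ = P t' := by
  have hScont : Continuous (Sm B R) :=
    (hB.matrix_mul (cont_inv R hR hRpos)).matrix_mul hB.matrix_transpose
  have hPc : ∀ (i j : Fin n), ContinuousOn (fun τ => P τ i j) (Set.Iic tf) :=
    fun i j τ hτ => ((hP τ hτ i j).continuousAt).continuousWithinAt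
  have hIsub : Set.Icc t' tf ⊆ Set.Iic tf := fun s hs => hs.2
  have hG₁c : ∀ (i j : Fin n),
      ContinuousOn (fun τ => (P τ * Sm B R τ - (A τ)ᵀ) i j) (Set.Icc t' tf) := by
    intro i j
    simp only [Matrix.sub_apply, Matrix.mul_apply, Matrix.transpose_apply]
    exact (continuousOn_finset_sum _ fun k _ => ((hPc i k).mono hIsub).mul
      ((hScont.matrix_elem k j).continuousOn)).sub ((hA.matrix_elem j i).continuousOn)
  have hG₂c : ∀ (i j : Fin n),
      ContinuousOn (fun τ => (Sm B R τ * (P τ)ᵀ - A τ) i j) (Set.Icc t' tf) := by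
    intro i j
    simp only [Matrix.sub_apply, Matrix.mul_apply, Matrix.transpose_apply]
    exact (continuousOn_finset_sum _ fun k _ => ((hScont.matrix_elem i k).continuousOn).mul
      ((hPc j k).mono hIsub)).sub ((hA.matrix_elem i j).continuousOn)
  have hcfc : ContinuousOn (fun τ => 1 + 2 * (∑ i, ∑ j, ((P τ * Sm B R τ - (A τ)ᵀ) i j)^2)
      + 2 * (∑ i, ∑ j, ((Sm B R τ * (P τ)ᵀ - A τ) i j)^2)) (Set.Icc t' tf) := by
    refine (continuousOn_const.add (continuousOn_const.mul ?_)).add (continuousOn_const.mul ?_)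
    · exact continuousOn_finset_sum _ fun i _ =>
        continuousOn_finset_sum _ fun j _ => (hG₁c i j).pow 2
    · exact continuousOn_finset_sum _ fun i _ =>
        continuousOn_finset_sum _ fun j _ => (hG₂c i j).pow 2
  obtain ⟨τs, hτsI, hmax⟩ := isCompact_Icc.exists_isMaxOn ⟨t', ⟨le_rfl, ht'⟩⟩ hcfc
  set L : ℝ := 1 + 2 * (∑ i, ∑ j, ((P τs * Sm B R τs - (A τs)ᵀ) i j)^2)
      + 2 * (∑ i, ∑ j, ((Sm B R τs * (P τs)ᵀ - A τs) i j)^2) with hLdef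
  have hu0 : (fun τ => ∑ i, ∑ j, ((P τ - (P τ)ᵀ) i j)^2) t' = 0 := by
    apply gronwall_zero _ (fun τ => ∑ i, ∑ j,
        2 * ((P τ - (P τ)ᵀ) i j) * ((Dm A B C R P τ - (Dm A B C R P τ)ᵀ) i j)) t' tf L ht'
    · intro τ hτ
      apply HasDerivAt.fun_sum; intro i _
      apply HasDerivAt.fun_sum; intro j _
      have hd : HasDerivAt (fun s => (P s - (P s)ᵀ) i j)
          ((Dm A B C R P τ - (Dm A B C R P τ)ᵀ) i j) τ := by
        simp only [Matrix.sub_apply, Matrix.transpose_apply]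
        exact (hP τ (hIsub hτ) i j).sub (hP τ (hIsub hτ) j i)
      have := hd.fun_pow 2
      exact this.congr_deriv (by push_cast; ring)
    · exact fun τ _ => Finset.sum_nonneg fun i _ => Finset.sum_nonneg fun j _ => sq_nonneg _
    · apply Finset.sum_eq_zero; intro i _; apply Finset.sum_eq_zero; intro j _
      simp [hPf]
    · intro τ hτ
      have hF : Dm A B C R P τ - (Dm A B C R P τ)ᵀ =
          (P τ * Sm B R τ - (A τ)ᵀ) * (P τ - (P τ)ᵀ)
            + (P τ - (P τ)ᵀ) * (Sm B R τ * (P τ)ᵀ - A τ) :=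
        Dm_sub_transpose A B C R hRpos P τ
      set E := P τ - (P τ)ᵀ with hE
      set F := Dm A B C R P τ - (Dm A B C R P τ)ᵀ with hFdef
      set g₁ := P τ * Sm B R τ - (A τ)ᵀ with hg₁
      set g₂ := Sm B R τ * (P τ)ᵀ - A τ with hg₂
      have hFsq : ∑ i, ∑ j, (F i j)^2 ≤
          2 * ((∑ i, ∑ j, (g₁ i j)^2) * (∑ i, ∑ j, (E i j)^2))
          + 2 * ((∑ i, ∑ j, (E i j)^2) * (∑ i, ∑ j, (g₂ i j)^2)) := by
        have e1 : ∀ i j, (F i j)^2 ≤ 2 * ((g₁ * E) i j)^2 + 2 * ((E * g₂) i j)^2 := by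
          intro i j
          have : F i j = (g₁ * E) i j + (E * g₂) i j := by rw [hF]; simp [Matrix.add_apply]
          rw [this]; nlinarith [sq_nonneg ((g₁ * E) i j - (E * g₂) i j)]
        calc ∑ i, ∑ j, (F i j)^2
            ≤ ∑ i, ∑ j, (2 * ((g₁ * E) i j)^2 + 2 * ((E * g₂) i j)^2) :=
              Finset.sum_le_sum fun i _ => Finset.sum_le_sum fun j _ => e1 i j
          _ = 2 * (∑ i, ∑ j, ((g₁ * E) i j)^2) + 2 * (∑ i, ∑ j, ((E * g₂) i j)^2) := by
              simp [Finset.sum_add_distrib, Finset.mul_sum]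
          _ ≤ 2 * ((∑ i, ∑ j, (g₁ i j)^2) * (∑ i, ∑ j, (E i j)^2))
              + 2 * ((∑ i, ∑ j, (E i j)^2) * (∑ i, ∑ j, (g₂ i j)^2)) := by
              have := frob_mul_le g₁ E
              have := frob_mul_le E g₂
              linarith
      have h2 : -(∑ i, ∑ j, (E i j)^2) - (∑ i, ∑ j, (F i j)^2)
          ≤ ∑ i, ∑ j, 2 * (E i j) * (F i j) := by
        have e2 : ∀ i j, -((E i j)^2 + (F i j)^2) ≤ 2 * (E i j) * (F i j) := by
          intro i j; nlinarith [sq_nonneg (E i j + F i j)]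
        calc -(∑ i, ∑ j, (E i j)^2) - (∑ i, ∑ j, (F i j)^2)
            = ∑ i, ∑ j, (-((E i j)^2 + (F i j)^2)) := by
              simp [Finset.sum_add_distrib]; ring
          _ ≤ ∑ i, ∑ j, 2 * (E i j) * (F i j) :=
              Finset.sum_le_sum fun i _ => Finset.sum_le_sum fun j _ => e2 i j
      have h3 : 1 + 2 * (∑ i, ∑ j, (g₁ i j)^2) + 2 * (∑ i, ∑ j, (g₂ i j)^2) ≤ L := hmax hτ
      have hun : 0 ≤ ∑ i, ∑ j, (E i j)^2 :=
        Finset.sum_nonneg fun i _ => Finset.sum_nonneg fun j _ => sq_nonneg _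
      have hg₁n : 0 ≤ ∑ i, ∑ j, (g₁ i j)^2 :=
        Finset.sum_nonneg fun i _ => Finset.sum_nonneg fun j _ => sq_nonneg _
      have hg₂n : 0 ≤ ∑ i, ∑ j, (g₂ i j)^2 :=
        Finset.sum_nonneg fun i _ => Finset.sum_nonneg fun j _ => sq_nonneg _
      nlinarith [mul_nonneg (sub_nonneg.mpr h3) hun]
  have hzero : ∀ i j, ((P t' - (P t')ᵀ) i j)^2 = 0 := by
    intro i j
    have h1 := Finset.sum_eq_zero_iff_of_nonneg
      (fun i (_ : i ∈ Finset.univ) => Finset.sum_nonneg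
        fun j _ => sq_nonneg (((P t' - (P t')ᵀ)) i j)) |>.mp hu0 i (Finset.mem_univ i)
    exact (Finset.sum_eq_zero_iff_of_nonneg fun j _ => sq_nonneg _).mp h1 j (Finset.mem_univ j)
  ext i j
  have h2 : (P t' - (P t')ᵀ) j i = 0 := pow_eq_zero_iff (n := 2) (by norm_num) |>.mp (hzero j i)
  simp only [Matrix.sub_apply, Matrix.transpose_apply, sub_eq_zero] at h2
  simpa using h2

/-- Paper's Lemma 3: monotonicity of backward PRE solutions in the terminal condition.
If `0 ≤ G₁ ≤ G₂` (Loewner) and `Pᵢ` solves the PRE on `(−∞, t_f]` with `Pᵢ(t_f) = Gᵢ`,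
then `P₁(t) ≤ P₂(t)` for all `t ≤ t_f`. -/
theorem PRE_sol_mono_in_terminal_condition
    {n m r : ℕ} (T : ℝ) (hT : 0 < T)
    (A : ℝ → Matrix (Fin n) (Fin n) ℝ) (B : ℝ → Matrix (Fin n) (Fin m) ℝ)
    (C : ℝ → Matrix (Fin r) (Fin n) ℝ) (R : ℝ → Matrix (Fin m) (Fin m) ℝ)
    (hA : Continuous A) (hB : Continuous B) (hC : Continuous C) (hR : Continuous R)
    (hAper : ∀ t, A (t + T) = A t) (hBper : ∀ t, B (t + T) = B t)
    (hCper : ∀ t, C (t + T) = C t) (hRper : ∀ t, R (t + T) = R t)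
    (hRpos : ∀ t, (R t).PosDef)
    (tf : ℝ) (G₁ G₂ : Matrix (Fin n) (Fin n) ℝ)
    (hG₁ : G₁.PosSemidef) (hG₂ : G₂.PosSemidef) (hG : (G₂ - G₁).PosSemidef)
    (P₁ P₂ : ℝ → Matrix (Fin n) (Fin n) ℝ)
    (hP₁ : IsPRESolOn A B C R P₁ (Set.Iic tf)) (hP₁f : P₁ tf = G₁)
    (hP₂ : IsPRESolOn A B C R P₂ (Set.Iic tf)) (hP₂f : P₂ tf = G₂)
    (t : ℝ) (ht : t ≤ tf) :
    (P₂ t - P₁ t).PosSemidef := by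
  classical
  -- symmetry of the two solutions
  have hG₁s : G₁ᵀ = G₁ := by
    have := hG₁.isHermitian
    rwa [Matrix.IsHermitian, Matrix.conjTranspose_eq_transpose_of_trivial] at this
  have hG₂s : G₂ᵀ = G₂ := by
    have := hG₂.isHermitian
    rwa [Matrix.IsHermitian, Matrix.conjTranspose_eq_transpose_of_trivial] at this
  have hsym₁ : ∀ τ, τ ≤ tf → (P₁ τ)ᵀ = P₁ τ := fun τ hτ =>
    sym_PRE hA hB hR hRpos hP₁ (by rw [hP₁f]; exact hG₁s) hτ
  have hsym₂ : ∀ τ, τ ≤ tf → (P₂ τ)ᵀ = P₂ τ := fun τ hτ =>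
    sym_PRE hA hB hR hRpos hP₂ (by rw [hP₂f]; exact hG₂s) hτ
  have hScont : Continuous (Sm B R) :=
    (hB.matrix_mul (cont_inv R hR hRpos)).matrix_mul hB.matrix_transpose
  have hP₁c : ∀ (i j : Fin n) (τ : ℝ), τ ≤ tf → ContinuousAt (fun s => P₁ s i j) τ :=
    fun i j τ hτ => (hP₁ τ hτ i j).continuousAt
  have hP₂c : ∀ (i j : Fin n) (τ : ℝ), τ ≤ tf → ContinuousAt (fun s => P₂ s i j) τ :=
    fun i j τ hτ => (hP₂ τ hτ i j).continuousAt
  -- the bound matrix W and the constant K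
  set W : ℝ → Matrix (Fin n) (Fin n) ℝ :=
    fun τ => A τ + (A τ)ᵀ - P₂ τ * Sm B R τ - Sm B R τ * P₁ τ with hWdef
  have hwc : ContinuousOn (fun τ => ∑ i, ∑ j, |W τ i j|) (Set.Icc t tf) := by
    apply continuousOn_finset_sum; intro i _
    apply continuousOn_finset_sum; intro j _
    apply ContinuousOn.abs
    simp only [hWdef, Matrix.sub_apply, Matrix.add_apply, Matrix.transpose_apply,
      Matrix.mul_apply]
    refine ((((hA.matrix_elem i j).continuousOn.add
      (hA.matrix_elem j i).continuousOn).sub ?_).sub ?_)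
    · refine continuousOn_finset_sum _ fun k _ => ContinuousOn.mul ?_
        ((hScont.matrix_elem k j).continuousOn)
      exact fun τ hτ => (hP₂c i k τ hτ.2).continuousWithinAt
    · refine continuousOn_finset_sum _ fun k _ => ContinuousOn.mul
        ((hScont.matrix_elem i k).continuousOn) ?_
      exact fun τ hτ => (hP₁c k j τ hτ.2).continuousWithinAt
  obtain ⟨τs, hτsI, hmax⟩ := isCompact_Icc.exists_isMaxOn ⟨t, le_rfl, ht⟩ hwc
  set K : ℝ := (∑ i, ∑ j, |W τs i j|) + 1 with hKdef
  have hKb : ∀ τ ∈ Set.Icc t tf, (∑ i, ∑ j, |W τ i j|) ≤ K - 1 := by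
    intro τ hτ
    have := hmax hτ
    simp only [Set.mem_setOf_eq] at this
    simp only [hKdef]
    linarith [this]
  -- derivative of the perturbed quadratic form
  have hQd : ∀ (ε : ℝ) (y : Fin n → ℝ) (τ : ℝ), τ ≤ tf → HasDerivAt
      (fun s => y ⬝ᵥ (P₂ s - P₁ s) *ᵥ y + ε * Real.exp (K * (tf - s)) * (y ⬝ᵥ y))
      (y ⬝ᵥ (Dm A B C R P₂ τ - Dm A B C R P₁ τ) *ᵥ y
        + ε * (Real.exp (K * (tf - τ)) * -K) * (y ⬝ᵥ y)) τ := by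
    intro ε y τ hτ
    have h1 : HasDerivAt (fun s => y ⬝ᵥ (P₂ s - P₁ s) *ᵥ y)
        (y ⬝ᵥ (Dm A B C R P₂ τ - Dm A B C R P₁ τ) *ᵥ y) τ := by
      have hfun : (fun s => y ⬝ᵥ (P₂ s - P₁ s) *ᵥ y)
          = fun s => ∑ i, ∑ j, y i * ((P₂ s i j - P₁ s i j) * y j) := by
        funext s; simp [quad_expand, Matrix.sub_apply]
      rw [hfun, quad_expand]
      apply HasDerivAt.fun_sum; intro i _
      apply HasDerivAt.fun_sum; intro j _
      have hd := (((hP₂ τ hτ i j).sub (hP₁ τ hτ i j)).mul_const (y j)).const_mul (y i)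
      convert hd using 1
      all_goals rfl
    have hl : HasDerivAt (fun s : ℝ => K * (tf - s)) (-K) τ := by
      simpa using ((hasDerivAt_id τ).const_sub tf).const_mul K
    have h2 : HasDerivAt (fun s => ε * Real.exp (K * (tf - s)) * (y ⬝ᵥ y))
        (ε * (Real.exp (K * (tf - τ)) * -K) * (y ⬝ᵥ y)) τ :=
      ((hl.exp).const_mul ε).mul_const (y ⬝ᵥ y)
    exact h1.add h2
  -- MAIN CLAIM
  have main : ∀ ε : ℝ, 0 < ε → ∀ s ∈ Set.Icc t tf, ∀ x : Fin n → ℝ, x ⬝ᵥ x = 1 →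
      0 < x ⬝ᵥ (P₂ s - P₁ s) *ᵥ x + ε * Real.exp (K * (tf - s)) * (x ⬝ᵥ x) := by
    intro ε hε
    by_contra hcon
    push_neg at hcon
    obtain ⟨s₀, hs₀, x₀, hx₀, hq₀⟩ := hcon
    set Q : ℝ × (Fin n → ℝ) → ℝ := fun p =>
      p.2 ⬝ᵥ (P₂ (min p.1 tf) - P₁ (min p.1 tf)) *ᵥ p.2
        + ε * Real.exp (K * (tf - p.1)) * (p.2 ⬝ᵥ p.2) with hQdef
    have hdotc : Continuous fun p : ℝ × (Fin n → ℝ) => p.2 ⬝ᵥ p.2 := by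
      have : (fun p : ℝ × (Fin n → ℝ) => p.2 ⬝ᵥ p.2)
          = fun p => ∑ i, p.2 i * p.2 i := rfl
      rw [this]
      exact continuous_finset_sum _ fun i _ =>
        ((continuous_apply i).comp continuous_snd).mul ((continuous_apply i).comp continuous_snd)
    have hQcont : Continuous Q := by
      apply Continuous.add
      · have hrw : (fun p : ℝ × (Fin n → ℝ) =>
            p.2 ⬝ᵥ (P₂ (min p.1 tf) - P₁ (min p.1 tf)) *ᵥ p.2)
            = fun p => ∑ i, ∑ j, p.2 i * ((P₂ (min p.1 tf) i j - P₁ (min p.1 tf) i j) * p.2 j) := by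
          funext p; simp [quad_expand, Matrix.sub_apply]
        rw [hrw]
        apply continuous_finset_sum; intro i _
        apply continuous_finset_sum; intro j _
        have hmin : Continuous fun p : ℝ × (Fin n → ℝ) => min p.1 tf :=
          continuous_fst.min continuous_const
        have he2 : Continuous fun p : ℝ × (Fin n → ℝ) => P₂ (min p.1 tf) i j := by
          rw [continuous_iff_continuousAt]; intro p
          exact ContinuousAt.comp (g := fun τ => P₂ τ i j)
            (f := fun p : ℝ × (Fin n → ℝ) => min p.1 tf)
            (hP₂c i j (min p.1 tf) (min_le_right _ _)) hmin.continuousAt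
        have he1 : Continuous fun p : ℝ × (Fin n → ℝ) => P₁ (min p.1 tf) i j := by
          rw [continuous_iff_continuousAt]; intro p
          exact ContinuousAt.comp (g := fun τ => P₁ τ i j)
            (f := fun p : ℝ × (Fin n → ℝ) => min p.1 tf)
            (hP₁c i j (min p.1 tf) (min_le_right _ _)) hmin.continuousAt
        exact ((continuous_apply i).comp continuous_snd).mul
          ((he2.sub he1).mul ((continuous_apply j).comp continuous_snd))
      · exact (continuous_const.mul (Real.continuous_exp.comp
          (continuous_const.mul (continuous_const.sub continuous_fst)))).mul hdotc
    set BadSet : Set (ℝ × (Fin n → ℝ)) :=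
      {p | p.1 ∈ Set.Icc t tf ∧ p.2 ⬝ᵥ p.2 = 1 ∧ Q p ≤ 0} with hBadSetdef
    have hS1 : IsCompact {x : Fin n → ℝ | x ⬝ᵥ x = 1} := by
      have hdc : Continuous fun x : Fin n → ℝ => x ⬝ᵥ x := by
        have : (fun x : Fin n → ℝ => x ⬝ᵥ x) = fun x => ∑ i, x i * x i := rfl
        rw [this]
        exact continuous_finset_sum _ fun i _ => (continuous_apply i).mul (continuous_apply i)
      have hcl : IsClosed {x : Fin n → ℝ | x ⬝ᵥ x = 1} := isClosed_eq hdc continuous_const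
      have hbd : {x : Fin n → ℝ | x ⬝ᵥ x = 1} ⊆ Metric.closedBall 0 1 := by
        intro x hx
        rw [Metric.mem_closedBall, dist_zero_right]
        rw [pi_norm_le_iff_of_nonneg (by norm_num : (0:ℝ) ≤ 1)]
        intro i
        rw [Real.norm_eq_abs, abs_le_one_iff_mul_self_le_one]
        calc x i * x i ≤ x ⬝ᵥ x := sq_le_dot x i
          _ = 1 := hx
      exact (isCompact_closedBall 0 1).of_isClosed_subset hcl hbd
    have hBadSetc : IsCompact BadSet := by
      apply (isCompact_Icc.prod hS1).of_isClosed_subset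
      · have : BadSet = (Prod.fst ⁻¹' Set.Icc t tf)
            ∩ ((fun p : ℝ × (Fin n → ℝ) => p.2 ⬝ᵥ p.2) ⁻¹' {1}) ∩ (Q ⁻¹' Set.Iic 0) := by
          ext p
          simp [hBadSetdef, and_assoc]
        rw [this]
        exact ((isClosed_Icc.preimage continuous_fst).inter
          (isClosed_singleton.preimage hdotc)).inter (isClosed_Iic.preimage hQcont)
      · intro p hp
        exact Set.mk_mem_prod hp.1 hp.2.1
    have hne : BadSet.Nonempty := by
      refine ⟨(s₀, x₀), hs₀, hx₀, ?_⟩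
      simpa [hQdef, min_eq_left hs₀.2] using hq₀
    have hBadc : IsCompact (Prod.fst '' BadSet) := hBadSetc.image continuous_fst
    have hBadne : (Prod.fst '' BadSet).Nonempty := hne.image _
    obtain ⟨⟨t₀, x⟩, ⟨ht₀I, hx1, hQ0⟩, hfst⟩ := hBadc.sSup_mem hBadne
    have hub : ∀ s ∈ Prod.fst '' BadSet, s ≤ t₀ := by
      intro s hs
      have := le_csSup hBadc.bddAbove hs
      rwa [← hfst] at this
    have hxne : x ≠ 0 := by
      intro h; rw [h] at hx1; simp [dotProduct] at hx1
    -- t₀ < tf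
    have ht₀tf : t₀ < tf := by
      rcases lt_or_eq_of_le ht₀I.2 with h | h
      · exact h
      · exfalso
        subst h
        have hQ0' : x ⬝ᵥ (G₂ - G₁) *ᵥ x + ε ≤ 0 := by
          simpa [hQdef, hP₁f, hP₂f, hx1] using hQ0
        have hpsd := hG.dotProduct_mulVec_nonneg x
        rw [star_trivial] at hpsd
        linarith
    -- positivity strictly after t₀
    have hAfter : ∀ s ∈ Set.Ioc t₀ tf, ∀ y : Fin n → ℝ, y ≠ 0 →
        0 < y ⬝ᵥ (P₂ s - P₁ s) *ᵥ y + ε * Real.exp (K * (tf - s)) * (y ⬝ᵥ y) := by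
      intro s hs y hy
      have hNq : ∀ z : Fin n → ℝ,
          z ⬝ᵥ ((P₂ s - P₁ s) + (ε * Real.exp (K * (tf - s))) • (1 : Matrix (Fin n) (Fin n) ℝ)) *ᵥ z
            = z ⬝ᵥ (P₂ s - P₁ s) *ᵥ z + ε * Real.exp (K * (tf - s)) * (z ⬝ᵥ z) := by
        intro z
        rw [Matrix.add_mulVec, Matrix.smul_mulVec, Matrix.one_mulVec, dotProduct_add,
          dotProduct_smul, smul_eq_mul]
      rw [← hNq]
      apply quad_pos_of_unit _ hy
      intro z hz
      rw [hNq z]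
      by_contra hle
      push_neg at hle
      have hsBad : s ∈ Prod.fst '' BadSet := by
        refine ⟨(s, z), ⟨⟨le_trans ht₀I.1 hs.1.le, hs.2⟩, hz, ?_⟩, rfl⟩
        simpa [hQdef, min_eq_left hs.2] using hle
      linarith [hub s hsBad, hs.1]
    -- the form is nonneg at t₀
    have hlim : ∀ y : Fin n → ℝ,
        0 ≤ y ⬝ᵥ (P₂ t₀ - P₁ t₀) *ᵥ y + ε * Real.exp (K * (tf - t₀)) * (y ⬝ᵥ y) := by
      intro y
      by_cases hy : y = 0
      · simp [hy]
      · have hct := (hQd ε y t₀ ht₀tf.le).continuousAt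
        refine ge_of_tendsto (hct.tendsto.mono_left (nhdsWithin_le_nhds : 𝓝[Set.Ioi t₀] t₀ ≤ 𝓝 t₀)) ?_
        filter_upwards [Ioc_mem_nhdsGT_of_mem (Set.mem_Ico.mpr ⟨le_rfl, ht₀tf⟩)] with s hs
        exact (hAfter s hs y hy).le
    have hQx : x ⬝ᵥ (P₂ t₀ - P₁ t₀) *ᵥ x + ε * Real.exp (K * (tf - t₀)) * (x ⬝ᵥ x) = 0 := by
      refine le_antisymm ?_ (hlim x)
      simpa [hQdef, min_eq_left ht₀I.2] using hQ0
    set c : ℝ := ε * Real.exp (K * (tf - t₀)) with hcdef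
    have hcpos : 0 < c := by positivity
    have hΔsym : (P₂ t₀ - P₁ t₀)ᵀ = P₂ t₀ - P₁ t₀ := by
      rw [Matrix.transpose_sub, hsym₁ t₀ ht₀tf.le, hsym₂ t₀ ht₀tf.le]
    have hM₀q : ∀ z : Fin n → ℝ,
        z ⬝ᵥ ((P₂ t₀ - P₁ t₀) + c • (1 : Matrix (Fin n) (Fin n) ℝ)) *ᵥ z
          = z ⬝ᵥ (P₂ t₀ - P₁ t₀) *ᵥ z + c * (z ⬝ᵥ z) := by
      intro z
      rw [Matrix.add_mulVec, Matrix.smul_mulVec, Matrix.one_mulVec, dotProduct_add,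
        dotProduct_smul, smul_eq_mul]
    have hM₀psd : ((P₂ t₀ - P₁ t₀) + c • (1 : Matrix (Fin n) (Fin n) ℝ)).PosSemidef := by
      refine Matrix.PosSemidef.of_dotProduct_mulVec_nonneg ?_ ?_
      · show _ᴴ = _
        rw [Matrix.conjTranspose_eq_transpose_of_trivial, Matrix.transpose_add,
          Matrix.transpose_smul, Matrix.transpose_one, hΔsym]
      · intro z
        rw [star_trivial, hM₀q z]
        exact hlim z
    have hker : ((P₂ t₀ - P₁ t₀) + c • (1 : Matrix (Fin n) (Fin n) ℝ)) *ᵥ x = 0 := by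
      apply (hM₀psd.dotProduct_mulVec_zero_iff x).mp
      rw [star_trivial, hM₀q x]
      exact hQx
    have hΔx : (P₂ t₀ - P₁ t₀) *ᵥ x = (-c) • x := by
      rw [Matrix.add_mulVec, Matrix.smul_mulVec, Matrix.one_mulVec] at hker
      rw [neg_smul]
      exact eq_neg_of_add_eq_zero_left hker
    -- derivative nonneg at t₀
    have hd0 : 0 ≤ x ⬝ᵥ (Dm A B C R P₂ t₀ - Dm A B C R P₁ t₀) *ᵥ x
        + ε * (Real.exp (K * (tf - t₀)) * -K) * (x ⬝ᵥ x) := by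
      refine deriv_nonneg_right _ _ t₀ tf ht₀tf (hQd ε x t₀ ht₀tf.le) hQx ?_
      intro s hs
      exact (hAfter s hs x hxne).le
    have hkq := key_quad (A t₀) (Sm B R t₀) (P₁ t₀) (P₂ t₀) x c hΔsym hΔx
    have hDd := Dm_diff A B C R P₁ P₂ t₀
    rw [hDd, hkq] at hd0
    have habs : |x ⬝ᵥ W t₀ *ᵥ x| ≤ K - 1 := by
      have h1 := quad_abs_le (W t₀) x
      rw [hx1, mul_one] at h1
      exact h1.trans (hKb t₀ ⟨ht₀I.1, ht₀tf.le⟩)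
    have hWx : x ⬝ᵥ W t₀ *ᵥ x ≤ K - 1 := (abs_le.mp habs).2
    have hterm : ε * (Real.exp (K * (tf - t₀)) * -K) * (x ⬝ᵥ x) = -(K * c) := by
      rw [hx1, hcdef]; ring
    rw [hterm] at hd0
    have hWform : x ⬝ᵥ (A t₀ + (A t₀)ᵀ - P₂ t₀ * Sm B R t₀ - Sm B R t₀ * P₁ t₀) *ᵥ x
        = x ⬝ᵥ W t₀ *ᵥ x := by rw [hWdef]
    rw [hWform] at hd0
    nlinarith [mul_le_mul_of_nonneg_left hWx hcpos.le]
  -- conclude: positive semidefiniteness at `t`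
  refine Matrix.PosSemidef.of_dotProduct_mulVec_nonneg ?_ ?_
  · show _ᴴ = _
    rw [Matrix.conjTranspose_eq_transpose_of_trivial, Matrix.transpose_sub,
      hsym₁ t ht, hsym₂ t ht]
  · intro y
    rw [star_trivial]
    by_cases hy : y = 0
    · simp [hy]
    · have hyy := dot_self_pos' hy
      set b : ℝ := Real.sqrt (y ⬝ᵥ y) with hb
      have hbpos : 0 < b := Real.sqrt_pos.mpr hyy
      have hbsq : b^2 = y ⬝ᵥ y := Real.sq_sqrt hyy.le
      have hunit : (b⁻¹ • y) ⬝ᵥ (b⁻¹ • y) = 1 := by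
        rw [smul_dotProduct, dotProduct_smul, smul_eq_mul, smul_eq_mul, ← hbsq]
        field_simp
      have hz : 0 ≤ (b⁻¹ • y) ⬝ᵥ (P₂ t - P₁ t) *ᵥ (b⁻¹ • y) := by
        by_contra h
        push_neg at h
        set E : ℝ := Real.exp (K * (tf - t)) with hE
        have hEpos : 0 < E := Real.exp_pos _
        set v : ℝ := (b⁻¹ • y) ⬝ᵥ (P₂ t - P₁ t) *ᵥ (b⁻¹ • y) with hv
        have hεpos : 0 < -v / E := div_pos (neg_pos.mpr h) hEpos
        have hcontr := main (-v / E) hεpos t ⟨le_rfl, ht⟩ (b⁻¹ • y) hunit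
        rw [hunit, mul_one, ← hv, ← hE] at hcontr
        have hmul : -v / E * E = -v := div_mul_cancel₀ _ (ne_of_gt hEpos)
        rw [hmul] at hcontr
        linarith
      have hq := quad_smul (P₂ t - P₁ t) y b⁻¹
      rw [hq] at hz
      nlinarith [pow_pos (inv_pos.mpr hbpos) 2]
end

section
/- Let P* be a solution of the PRE on all of ℝ such that P*(t) is symmetric positive semidefinite for every t, and let P be a solution of the PRE on (−∞, τ] with P(τ) = 0. Then P(t) ≤ P*(t) in the Loewner order for all t ≤ τ. (Claim from Case 2 of the proof of Theorem 1: P(t; τ, 0) ≤ P*(t).) -/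
set_option maxHeartbeats 1000000


open Matrix Filter Topology

section AuxLemmas

variable {n : ℕ}

/-- Each entry bound from compactness. -/
lemma exists_entry_bound (f : ℝ → Matrix (Fin n) (Fin n) ℝ) {a b : ℝ}
    (hf : ∀ i j, ContinuousOn (fun u => f u i j) (Set.Icc a b)) :
    ∃ c, 0 ≤ c ∧ ∀ u ∈ Set.Icc a b, ∀ i j, |f u i j| ≤ c := by
  set F : ℝ → ℝ := fun u => ∑ i, ∑ j, |f u i j| with hF
  have hFc : ContinuousOn F (Set.Icc a b) := by
    apply continuousOn_finset_sum
    intro i _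
    apply continuousOn_finset_sum
    intro j _
    exact (hf i j).abs
  obtain ⟨c0, hc0⟩ := isCompact_Icc.exists_bound_of_continuousOn hFc
  refine ⟨max c0 0, le_max_right _ _, fun u hu i j => ?_⟩
  have h1 : |f u i j| ≤ ∑ j', |f u i j'| :=
    Finset.single_le_sum (f := fun j' => |f u i j'|) (fun j' _ => abs_nonneg _) (Finset.mem_univ j)
  have h2 : (∑ j', |f u i j'|) ≤ F u :=
    Finset.single_le_sum (f := fun i' => ∑ j', |f u i' j'|)
      (fun i' _ => Finset.sum_nonneg fun j' _ => abs_nonneg _) (Finset.mem_univ i)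
  have h3 : F u ≤ c0 := by
    have := hc0 u hu
    calc F u ≤ ‖F u‖ := le_abs_self _
    _ ≤ c0 := this
  exact h1.trans (h2.trans (h3.trans (le_max_left _ _)))

lemma abs_quadratic_le (M : Matrix (Fin n) (Fin n) ℝ) {c : ℝ} (hc : 0 ≤ c)
    (hM : ∀ i j, |M i j| ≤ c) (y : Fin n → ℝ) :
    |y ⬝ᵥ M *ᵥ y| ≤ c * n * ∑ i, y i ^ 2 := by
  have h1 : |y ⬝ᵥ M *ᵥ y| ≤ c * (∑ i, |y i|) ^ 2 := by
    have : y ⬝ᵥ M *ᵥ y = ∑ i, ∑ j, y i * M i j * y j := by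
      simp [dotProduct, mulVec, Finset.mul_sum, mul_assoc]
    rw [this, sq, Finset.sum_mul_sum]
    calc |∑ i, ∑ j, y i * M i j * y j| ≤ ∑ i, ∑ j, |y i * M i j * y j| := by
          refine (Finset.abs_sum_le_sum_abs _ _).trans ?_
          exact Finset.sum_le_sum fun i _ => Finset.abs_sum_le_sum_abs _ _
    _ ≤ ∑ i, ∑ j, c * (|y i| * |y j|) := by
          refine Finset.sum_le_sum fun i _ => Finset.sum_le_sum fun j _ => ?_
          rw [abs_mul, abs_mul]
          calc |y i| * |M i j| * |y j| ≤ |y i| * c * |y j| :=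
                mul_le_mul_of_nonneg_right
                  (mul_le_mul_of_nonneg_left (hM i j) (abs_nonneg _)) (abs_nonneg _)
          _ = c * (|y i| * |y j|) := by ring
    _ = c * ∑ i, ∑ j, |y i| * |y j| := by rw [Finset.mul_sum]; congr 1; ext i; rw [Finset.mul_sum]
  refine h1.trans ?_
  have h2 : (∑ i, |y i|) ^ 2 ≤ (n : ℝ) * ∑ i, y i ^ 2 := by
    have := Finset.sum_mul_sq_le_sq_mul_sq Finset.univ (fun i : Fin n => |y i|) (fun _ => 1)
    simp only [mul_one, one_pow, Finset.sum_const, Finset.card_univ, Fintype.card_fin,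
      nsmul_eq_mul, sq_abs] at this
    calc (∑ i, |y i|) ^ 2 ≤ (∑ i, (y i)^2) * n := this
    _ = (n : ℝ) * ∑ i, y i ^ 2 := by ring
  calc c * (∑ i, |y i|) ^ 2 ≤ c * ((n:ℝ) * ∑ i, y i ^ 2) := by
        exact mul_le_mul_of_nonneg_left h2 hc
  _ = c * n * ∑ i, y i ^ 2 := by ring

lemma sum_sq_pos_of_ne_zero {y : Fin n → ℝ} (hy : y ≠ 0) : 0 < ∑ i, y i ^ 2 := by
  rcases Function.ne_iff.1 hy with ⟨i, hi⟩
  have : (0:ℝ) < y i ^ 2 := pow_two_pos_of_ne_zero hi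
  exact Finset.sum_pos' (fun j _ => sq_nonneg _) ⟨i, Finset.mem_univ i, this⟩

lemma posdef_margin (M : Matrix (Fin n) (Fin n) ℝ)
    (h : ∀ y : Fin n → ℝ, y ≠ 0 → 0 < y ⬝ᵥ M *ᵥ y) :
    ∃ c > 0, ∀ y : Fin n → ℝ, c * (∑ i, y i ^ 2) ≤ y ⬝ᵥ M *ᵥ y := by
  rcases isEmpty_or_nonempty (Fin n) with hE | hNE
  · refine ⟨1, one_pos, fun y => ?_⟩
    simp [dotProduct]
  · set Sph : Set (Fin n → ℝ) := {y | ∑ i, y i ^ 2 = 1} with hSph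
    have hcont : Continuous fun y : Fin n → ℝ => y ⬝ᵥ M *ᵥ y := by
      have : (fun y : Fin n → ℝ => y ⬝ᵥ M *ᵥ y)
          = fun y : Fin n → ℝ => ∑ i, ∑ j, y i * (M i j * y j) := by
        funext y
        simp [dotProduct, mulVec, Finset.mul_sum]
      rw [this]
      fun_prop
    have hclosed : IsClosed Sph :=
      isClosed_eq (by fun_prop) continuous_const
    have hbdd : Bornology.IsBounded Sph := by
      rw [Metric.isBounded_iff_subset_closedBall 0]
      refine ⟨1, fun y hy => ?_⟩
      simp only [Metric.mem_closedBall, dist_zero_right]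
      rw [pi_norm_le_iff_of_nonneg zero_le_one]
      intro i
      rw [Real.norm_eq_abs, ← sq_le_one_iff_abs_le_one]
      calc y i ^ 2 ≤ ∑ j, y j ^ 2 :=
            Finset.single_le_sum (f := fun j => y j ^ 2) (fun j _ => sq_nonneg _)
              (Finset.mem_univ i)
      _ = 1 := hy
    have hcompact : IsCompact Sph := Metric.isCompact_of_isClosed_isBounded hclosed hbdd
    have hne : Sph.Nonempty := by
      obtain ⟨i⟩ := hNE
      refine ⟨Pi.single i 1, ?_⟩
      simp only [hSph, Set.mem_setOf_eq]
      rw [Finset.sum_eq_single i]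
      · simp
      · intro j _ hj; simp [Pi.single_apply, hj]
      · simp
    obtain ⟨y₀, hy₀S, hy₀min⟩ := hcompact.exists_isMinOn hne hcont.continuousOn
    have hy₀ne : y₀ ≠ 0 := by
      intro h0
      have : (∑ i, y₀ i ^ 2) = 1 := hy₀S
      rw [h0] at this
      simp at this
    refine ⟨y₀ ⬝ᵥ M *ᵥ y₀, h y₀ hy₀ne, fun y => ?_⟩
    rcases eq_or_ne y 0 with rfl | hy
    · simp
    · have hsum : 0 < ∑ i, y i ^ 2 := sum_sq_pos_of_ne_zero hy
      set r : ℝ := Real.sqrt (∑ i, y i ^ 2) with hr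
      have hrpos : 0 < r := Real.sqrt_pos.2 hsum
      have hr2 : r ^ 2 = ∑ i, y i ^ 2 := Real.sq_sqrt hsum.le
      have hmem : (r⁻¹ • y) ∈ Sph := by
        simp only [hSph, Set.mem_setOf_eq, Pi.smul_apply, smul_eq_mul, mul_pow,
          ← Finset.mul_sum, ← hr2]
        field_simp
      have hval : (r⁻¹ • y) ⬝ᵥ M *ᵥ (r⁻¹ • y) = r⁻¹ * r⁻¹ * (y ⬝ᵥ M *ᵥ y) := by
        rw [smul_dotProduct, mulVec_smul, dotProduct_smul]
        simp [smul_eq_mul]; ring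
      have := hy₀min hmem
      rw [Set.mem_setOf_eq] at this
      have h2 : y₀ ⬝ᵥ M *ᵥ y₀ ≤ r⁻¹ * r⁻¹ * (y ⬝ᵥ M *ᵥ y) := by
        simpa [hval] using this
      have h3 : (y₀ ⬝ᵥ M *ᵥ y₀) * (r * r) ≤ y ⬝ᵥ M *ᵥ y := by
        have := mul_le_mul_of_nonneg_right h2 (by positivity : (0:ℝ) ≤ r * r)
        calc (y₀ ⬝ᵥ M *ᵥ y₀) * (r * r) ≤ r⁻¹ * r⁻¹ * (y ⬝ᵥ M *ᵥ y) * (r * r) := this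
        _ = y ⬝ᵥ M *ᵥ y := by field_simp
      calc (y₀ ⬝ᵥ M *ᵥ y₀) * (∑ i, y i ^ 2) = (y₀ ⬝ᵥ M *ᵥ y₀) * (r * r) := by
            rw [← hr2]; ring_nf
      _ ≤ y ⬝ᵥ M *ᵥ y := h3

lemma PRE_sol_symm {n m r : ℕ}
    (A : ℝ → Matrix (Fin n) (Fin n) ℝ) (B : ℝ → Matrix (Fin n) (Fin m) ℝ)
    (C : ℝ → Matrix (Fin r) (Fin n) ℝ) (R : ℝ → Matrix (Fin m) (Fin m) ℝ)
    (hA : Continuous A)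
    (Sm : ℝ → Matrix (Fin n) (Fin n) ℝ) (hSdef : ∀ u, Sm u = B u * (R u)⁻¹ * (B u)ᵀ)
    (hScont : Continuous Sm) (hRinvT : ∀ u, ((R u)⁻¹)ᵀ = (R u)⁻¹)
    (τ : ℝ) (P : ℝ → Matrix (Fin n) (Fin n) ℝ)
    (hP : IsPRESolOn A B C R P (Set.Iic τ)) (hPf : P τ = 0)
    (s₀ : ℝ) (hs₀ : s₀ ≤ τ) : (P s₀)ᵀ = P s₀ := by
  have hPcont : ∀ i j, ContinuousOn (fun u => P u i j) (Set.Icc s₀ τ) := fun i j u hu =>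
    ((hP u hu.2 i j).continuousAt).continuousWithinAt
  obtain ⟨cA, hcA0, hcA⟩ := exists_entry_bound A
    (fun i j => (hA.matrix_elem i j).continuousOn (s := Set.Icc s₀ τ))
  obtain ⟨cS, hcS0, hcS⟩ := exists_entry_bound Sm
    (fun i j => (hScont.matrix_elem i j).continuousOn (s := Set.Icc s₀ τ))
  obtain ⟨cP, hcP0, hcP⟩ := exists_entry_bound P hPcont
  set K : ℝ := 2*n*cA + 2*n^2*cS*cP with hK
  have hK0 : 0 ≤ K := by positivity
  set σ : ℝ → ℝ := fun u => s₀ + τ - u with hσdef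
  have hσmem : ∀ u ∈ Set.Icc s₀ τ, σ u ∈ Set.Icc s₀ τ := by
    intro u hu; constructor <;> simp only [hσdef] <;> linarith [hu.1, hu.2]
  set Ψ : ℝ → Matrix (Fin n) (Fin n) ℝ := fun s =>
    -((A s)ᵀ * P s + P s * A s - P s * B s * (R s)⁻¹ * (B s)ᵀ * P s + (C s)ᵀ * C s) with hΨ
  set g : ℝ → (Fin n → Fin n → ℝ) := fun u i j => P (σ u) i j - P (σ u) j i with hg
  set g' : ℝ → (Fin n → Fin n → ℝ) := fun u i j => Ψ (σ u) j i - Ψ (σ u) i j with hg'def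
  have hσderiv : ∀ u : ℝ, HasDerivAt σ (-1) u := by
    intro u
    exact (hasDerivAt_id u).const_sub (s₀ + τ)
  have hgderiv : ∀ u ∈ Set.Icc s₀ τ, HasDerivAt g (g' u) u := by
    intro u hu
    apply hasDerivAt_pi.2; intro i
    apply hasDerivAt_pi.2; intro j
    have hmem : σ u ≤ τ := (hσmem u hu).2
    have h1 : HasDerivAt (fun v => P (σ v) i j) (Ψ (σ u) i j * (-1)) u :=
      HasDerivAt.comp u (hP (σ u) hmem i j) (hσderiv u)
    have h2 : HasDerivAt (fun v => P (σ v) j i) (Ψ (σ u) j i * (-1)) u :=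
      HasDerivAt.comp u (hP (σ u) hmem j i) (hσderiv u)
    have h3 := h1.sub h2
    refine h3.congr_deriv (Eq.symm ?_)
    change Ψ (σ u) j i - Ψ (σ u) i j = Ψ (σ u) i j * -1 - Ψ (σ u) j i * -1; ring
  -- entry bound for E
  have hbound : ∀ u ∈ Set.Icc s₀ τ, ‖g' u‖ ≤ K * ‖g u‖ := by
    intro u hu
    set s := σ u with hs
    have hsmem : s ∈ Set.Icc s₀ τ := hσmem u hu
    set E : Matrix (Fin n) (Fin n) ℝ := P s - (P s)ᵀ with hE
    have hEg : ∀ k l, E k l = g u k l := by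
      intro k l; simp [hE, hg, transpose_apply, hs]
    have matIdent : (Ψ s)ᵀ - Ψ s
        = (A s)ᵀ * E + E * A s - E * Sm s * P s - (P s)ᵀ * Sm s * E := by
      have hS' : Sm s = B s * (R s)⁻¹ * (B s)ᵀ := hSdef s
      simp only [hΨ, hE, hS', transpose_neg, transpose_add, transpose_sub, transpose_mul,
        transpose_transpose, hRinvT s, Matrix.mul_sub, Matrix.sub_mul, Matrix.mul_assoc]
      abel
    have hEbnd : ∀ k l, |E k l| ≤ ‖g u‖ := by
      intro k l
      rw [hEg]
      calc |g u k l| = ‖g u k l‖ := (Real.norm_eq_abs _).symm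
      _ ≤ ‖g u k‖ := norm_le_pi_norm (g u k) l
      _ ≤ ‖g u‖ := norm_le_pi_norm (g u) k
    have entry : ∀ i j, |g' u i j| ≤ K * ‖g u‖ := by
      intro i j
      have hgij : g' u i j = ((Ψ s)ᵀ - Ψ s) i j := by
        simp [hg'def, transpose_apply, hs]
      rw [hgij, matIdent]
      have b1 : |((A s)ᵀ * E) i j| ≤ n * cA * ‖g u‖ := by
        rw [mul_apply]
        calc |∑ k, (A s)ᵀ i k * E k j| ≤ ∑ k, |(A s)ᵀ i k * E k j| :=
              Finset.abs_sum_le_sum_abs _ _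
        _ ≤ ∑ _k : Fin n, cA * ‖g u‖ := by
              refine Finset.sum_le_sum fun k _ => ?_
              rw [abs_mul, transpose_apply]
              exact mul_le_mul (hcA s hsmem k i) (hEbnd k j) (abs_nonneg _) hcA0
        _ = n * cA * ‖g u‖ := by
              simp [Finset.sum_const, Finset.card_univ]; ring
      have b2 : |(E * A s) i j| ≤ n * cA * ‖g u‖ := by
        rw [mul_apply]
        calc |∑ k, E i k * A s k j| ≤ ∑ k, |E i k * A s k j| := Finset.abs_sum_le_sum_abs _ _
        _ ≤ ∑ _k : Fin n, cA * ‖g u‖ := by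
              refine Finset.sum_le_sum fun k _ => ?_
              rw [abs_mul, mul_comm]
              exact mul_le_mul (hcA s hsmem k j) (hEbnd i k) (abs_nonneg _) hcA0
        _ = n * cA * ‖g u‖ := by
              simp [Finset.sum_const, Finset.card_univ]; ring
      have b3 : |(E * Sm s * P s) i j| ≤ n^2 * cS * cP * ‖g u‖ := by
        rw [mul_apply]
        calc |∑ l, (E * Sm s) i l * P s l j| ≤ ∑ l, |(E * Sm s) i l * P s l j| :=
              Finset.abs_sum_le_sum_abs _ _
        _ ≤ ∑ _l : Fin n, (n * cS * ‖g u‖) * cP := by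
              refine Finset.sum_le_sum fun l _ => ?_
              rw [abs_mul]
              have hESbnd : |(E * Sm s) i l| ≤ n * cS * ‖g u‖ := by
                rw [mul_apply]
                calc |∑ k, E i k * Sm s k l| ≤ ∑ k, |E i k * Sm s k l| :=
                      Finset.abs_sum_le_sum_abs _ _
                _ ≤ ∑ _k : Fin n, cS * ‖g u‖ := by
                      refine Finset.sum_le_sum fun k _ => ?_
                      rw [abs_mul, mul_comm]
                      exact mul_le_mul (hcS s hsmem k l) (hEbnd i k) (abs_nonneg _) hcS0
                _ = n * cS * ‖g u‖ := by
                      simp [Finset.sum_const, Finset.card_univ]; ring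
              exact mul_le_mul hESbnd (hcP s hsmem l j) (abs_nonneg _) (by positivity)
        _ = n^2 * cS * cP * ‖g u‖ := by
              simp [Finset.sum_const, Finset.card_univ]; ring
      have b4 : |((P s)ᵀ * Sm s * E) i j| ≤ n^2 * cS * cP * ‖g u‖ := by
        rw [mul_apply]
        calc |∑ l, ((P s)ᵀ * Sm s) i l * E l j| ≤ ∑ l, |((P s)ᵀ * Sm s) i l * E l j| :=
              Finset.abs_sum_le_sum_abs _ _
        _ ≤ ∑ _l : Fin n, (n * cP * cS) * ‖g u‖ := by
              refine Finset.sum_le_sum fun l _ => ?_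
              rw [abs_mul]
              have hPSbnd : |((P s)ᵀ * Sm s) i l| ≤ n * cP * cS := by
                rw [mul_apply]
                calc |∑ k, (P s)ᵀ i k * Sm s k l| ≤ ∑ k, |(P s)ᵀ i k * Sm s k l| :=
                      Finset.abs_sum_le_sum_abs _ _
                _ ≤ ∑ _k : Fin n, cP * cS := by
                      refine Finset.sum_le_sum fun k _ => ?_
                      rw [abs_mul, transpose_apply]
                      exact mul_le_mul (hcP s hsmem k i) (hcS s hsmem k l) (abs_nonneg _) hcP0
                _ = n * cP * cS := by
                      simp [Finset.sum_const, Finset.card_univ]; ring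
              exact mul_le_mul hPSbnd (hEbnd l j) (abs_nonneg _) (by positivity)
        _ = n^2 * cS * cP * ‖g u‖ := by
              simp [Finset.sum_const, Finset.card_univ]; ring
      calc |((A s)ᵀ * E + E * A s - E * Sm s * P s - (P s)ᵀ * Sm s * E) i j|
          ≤ |((A s)ᵀ * E) i j| + |(E * A s) i j| + |(E * Sm s * P s) i j|
            + |((P s)ᵀ * Sm s * E) i j| := by
            simp only [Matrix.sub_apply, Matrix.add_apply]
            calc |((A s)ᵀ * E) i j + (E * A s) i j - (E * Sm s * P s) i j
                  - ((P s)ᵀ * Sm s * E) i j|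
                ≤ |((A s)ᵀ * E) i j + (E * A s) i j - (E * Sm s * P s) i j|
                  + |((P s)ᵀ * Sm s * E) i j| := abs_sub _ _
            _ ≤ |((A s)ᵀ * E) i j + (E * A s) i j| + |(E * Sm s * P s) i j|
                  + |((P s)ᵀ * Sm s * E) i j| := by
                  have := abs_sub (((A s)ᵀ * E) i j + (E * A s) i j) ((E * Sm s * P s) i j)
                  linarith
            _ ≤ _ := by
                  have := abs_add_le (((A s)ᵀ * E) i j) ((E * A s) i j)
                  linarith
      _ ≤ n * cA * ‖g u‖ + n * cA * ‖g u‖ + n^2*cS*cP*‖g u‖ + n^2*cS*cP*‖g u‖ := by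
            linarith
      _ = K * ‖g u‖ := by rw [hK]; ring
    rw [pi_norm_le_iff_of_nonneg (mul_nonneg hK0 (norm_nonneg _))]
    intro i
    rw [pi_norm_le_iff_of_nonneg (mul_nonneg hK0 (norm_nonneg _))]
    intro j
    rw [Real.norm_eq_abs]
    exact entry i j
  have hgcont : ContinuousOn g (Set.Icc s₀ τ) := by
    apply continuousOn_pi.2; intro i
    apply continuousOn_pi.2; intro j
    have hσc : ContinuousOn σ (Set.Icc s₀ τ) := (continuous_const.sub continuous_id).continuousOn
    exact ((hPcont i j).comp hσc hσmem).sub ((hPcont j i).comp hσc hσmem)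
  have hga : ‖g s₀‖ ≤ 0 := by
    have : g s₀ = 0 := by
      funext i j
      simp [hg, hσdef, hPf]
    rw [this, norm_zero]
  have := norm_le_gronwallBound_of_norm_deriv_right_le (f := g) (f' := g') (δ := 0) (K := K)
    (ε := 0) (a := s₀) (b := τ) hgcont
    (fun u hu => (hgderiv u (Set.Ico_subset_Icc_self hu)).hasDerivWithinAt)
    hga
    (fun u hu => by
      rw [add_zero]
      exact hbound u (Set.Ico_subset_Icc_self hu))
  have hgτ := this τ (Set.right_mem_Icc.2 hs₀)
  rw [gronwallBound_ε0_δ0] at hgτ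
  have hg0 : g τ = 0 := norm_le_zero_iff.1 hgτ
  ext i j
  have h5 := congrFun (congrFun hg0 i) j
  simp only [hg] at h5
  have h6 : σ τ = s₀ := by simp [hσdef]
  rw [h6] at h5
  rw [transpose_apply]
  have h7 : P s₀ i j - P s₀ j i = 0 := h5
  linarith [h7]

lemma dot_expand {n : ℕ} (N : Matrix (Fin n) (Fin n) ℝ) (y : Fin n → ℝ) :
    y ⬝ᵥ N *ᵥ y = ∑ i, ∑ j, y i * N i j * y j := by
  simp [dotProduct, mulVec, Finset.mul_sum, mul_assoc]


end AuxLemmas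

/-- `P(t; τ, 0) ≤ P*(t)`: if `P*` solves the PRE on all of ℝ with symmetric positive
semidefinite values and `P` solves the PRE on `(−∞, τ]` with `P(τ) = 0`, then
`P(t) ≤ P*(t)` (Loewner) for all `t ≤ τ`. -/
theorem PRE_backward_sol_zero_terminal_le_global_sol
    {n m r : ℕ} (T : ℝ) (hT : 0 < T)
    (A : ℝ → Matrix (Fin n) (Fin n) ℝ) (B : ℝ → Matrix (Fin n) (Fin m) ℝ)
    (C : ℝ → Matrix (Fin r) (Fin n) ℝ) (R : ℝ → Matrix (Fin m) (Fin m) ℝ)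
    (hA : Continuous A) (hB : Continuous B) (hC : Continuous C) (hR : Continuous R)
    (hAper : ∀ t, A (t + T) = A t) (hBper : ∀ t, B (t + T) = B t)
    (hCper : ∀ t, C (t + T) = C t) (hRper : ∀ t, R (t + T) = R t)
    (hRpos : ∀ t, (R t).PosDef)
    (Pstar : ℝ → Matrix (Fin n) (Fin n) ℝ)
    (hPstar : IsPRESolOn A B C R Pstar Set.univ)
    (hPstarPsd : ∀ t, (Pstar t).PosSemidef)
    (τ : ℝ) (P : ℝ → Matrix (Fin n) (Fin n) ℝ)
    (hP : IsPRESolOn A B C R P (Set.Iic τ)) (hPf : P τ = 0)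
    (t : ℝ) (ht : t ≤ τ) :
    (Pstar t - P t).PosSemidef := by
  classical
  -- transposes of R⁻¹ etc.
  have hRT : ∀ u, (R u)ᵀ = R u := fun u => by
    rw [← conjTranspose_eq_transpose_of_trivial]; exact (hRpos u).1
  have hRinvT : ∀ u, ((R u)⁻¹)ᵀ = (R u)⁻¹ := fun u => by
    rw [transpose_nonsing_inv, hRT]
  set Sm : ℝ → Matrix (Fin n) (Fin n) ℝ := fun u => B u * (R u)⁻¹ * (B u)ᵀ with hSm
  have hRinvCont : Continuous fun u => (R u)⁻¹ := by
    have heq : (fun u => (R u)⁻¹) = fun u => ((R u).det)⁻¹ • (R u).adjugate := by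
      funext u
      rw [Matrix.inv_def, Ring.inverse_eq_inv]
    rw [heq]
    exact (hR.matrix_det.inv₀ fun u => (hRpos u).det_pos.ne').smul hR.matrix_adjugate
  have hScont : Continuous Sm := (hB.matrix_mul hRinvCont).matrix_mul hB.matrix_transpose
  have hPsymm : ∀ s ≤ τ, (P s)ᵀ = P s := fun s hs =>
    PRE_sol_symm A B C R hA Sm (fun _ => rfl) hScont hRinvT τ P hP hPf s hs
  have hPstarT : ∀ u, (Pstar u)ᵀ = Pstar u := fun u => by
    rw [← conjTranspose_eq_transpose_of_trivial]; exact (hPstarPsd u).1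
  have hPstarCont : ∀ i j, Continuous fun u => Pstar u i j := fun i j =>
    continuous_iff_continuousAt.2 fun u => (hPstar u trivial i j).continuousAt
  have hPcont : ∀ (i j : Fin n), ContinuousOn (fun u => P u i j) (Set.Iic τ) := fun i j u hu =>
    ((hP u hu i j).continuousAt).continuousWithinAt
  have hHerm : (Pstar t - P t).IsHermitian := by
    rw [Matrix.IsHermitian, conjTranspose_eq_transpose_of_trivial, transpose_sub, hPstarT,
      hPsymm t ht]
  refine Matrix.PosSemidef.of_dotProduct_mulVec_nonneg hHerm ?_
  intro x
  rw [star_trivial]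
  -- the coefficient matrix and its bound
  set Mf : ℝ → Matrix (Fin n) (Fin n) ℝ :=
    fun u => (A u)ᵀ + A u - Sm u * Pstar u - P u * Sm u with hMf
  have hMcont : ∀ i j, ContinuousOn (fun u => Mf u i j) (Set.Icc t τ) := by
    intro i j
    have hexpand : (fun u => Mf u i j) = fun u =>
        A u j i + A u i j - (∑ k, Sm u i k * Pstar u k j) - (∑ k, P u i k * Sm u k j) := by
      funext u
      simp [hMf, Matrix.sub_apply, Matrix.add_apply, transpose_apply, mul_apply]
    rw [hexpand]
    have h1 : ContinuousOn (fun u => A u j i) (Set.Icc t τ) := (hA.matrix_elem j i).continuousOn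
    have h2 : ContinuousOn (fun u => A u i j) (Set.Icc t τ) := (hA.matrix_elem i j).continuousOn
    have h3 : ContinuousOn (fun u => ∑ k, Sm u i k * Pstar u k j) (Set.Icc t τ) :=
      continuousOn_finset_sum _ fun k _ =>
        (hScont.matrix_elem i k).continuousOn.mul (hPstarCont k j).continuousOn
    have h4 : ContinuousOn (fun u => ∑ k, P u i k * Sm u k j) (Set.Icc t τ) :=
      continuousOn_finset_sum _ fun k _ =>
        ((hPcont i k).mono Set.Icc_subset_Iic_self).mul (hScont.matrix_elem k j).continuousOn
    exact ((h1.add h2).sub h3).sub h4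
  obtain ⟨cM, hcM0, hcM⟩ := exists_entry_bound Mf hMcont
  set K' : ℝ := n * cM + 1 with hK'
  have hK'pos : 0 < K' := by positivity
  -- the key estimate, for every positive ε
  have hkey : ∀ ε : ℝ, 0 < ε →
      0 ≤ x ⬝ᵥ (Pstar t - P t) *ᵥ x + ε * Real.exp (K' * (τ - t)) * ∑ i, x i ^ 2 := by
    intro ε hε
    set e : ℝ → ℝ := fun u => Real.exp (K' * (τ - u)) with he
    have hepos : ∀ u, 0 < e u := fun u => Real.exp_pos _
    set W : ℝ → Matrix (Fin n) (Fin n) ℝ :=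
      fun u => (Pstar u - P u) + (ε * e u) • (1 : Matrix (Fin n) (Fin n) ℝ) with hW
    have hform1 : ∀ (c : ℝ) (y : Fin n → ℝ),
        y ⬝ᵥ (c • (1 : Matrix (Fin n) (Fin n) ℝ)) *ᵥ y = c * ∑ i, y i ^ 2 := by
      intro c y
      rw [smul_mulVec, one_mulVec, dotProduct_smul, smul_eq_mul]
      congr 1
      simp [dotProduct, sq]
    have hWform : ∀ u (y : Fin n → ℝ),
        y ⬝ᵥ W u *ᵥ y = y ⬝ᵥ (Pstar u - P u) *ᵥ y + (ε * e u) * ∑ i, y i ^ 2 := by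
      intro u y
      rw [hW]
      rw [add_mulVec, dotProduct_add, hform1]
    have hWentry : ∀ i j, ContinuousOn (fun u => W u i j) (Set.Icc t τ) := by
      intro i j
      have hexpand : (fun u => W u i j) = fun u =>
          Pstar u i j - P u i j + (ε * e u) * (1 : Matrix (Fin n) (Fin n) ℝ) i j := by
        funext u
        simp [hW, Matrix.add_apply, Matrix.sub_apply, Matrix.smul_apply, smul_eq_mul]
      rw [hexpand]
      have hec : Continuous e := by
        apply Real.continuous_exp.comp
        fun_prop
      exact (((hPstarCont i j).continuousOn.sub
        ((hPcont i j).mono Set.Icc_subset_Iic_self)).add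
        (((continuous_const.mul hec).mul continuous_const).continuousOn))
    have hWcont : ∀ y : Fin n → ℝ, ContinuousOn (fun u => y ⬝ᵥ W u *ᵥ y) (Set.Icc t τ) := by
      intro y
      have hexpand : (fun u => y ⬝ᵥ W u *ᵥ y) = fun u => ∑ i, ∑ j, y i * W u i j * y j := by
        funext u; exact dot_expand _ _
      rw [hexpand]
      exact continuousOn_finset_sum _ fun i _ => continuousOn_finset_sum _ fun j _ =>
        ((continuousOn_const.mul (hWentry i j)).mul continuousOn_const)
    set D : Set ℝ :=
      {s | s ∈ Set.Icc t τ ∧ ∀ u ∈ Set.Icc s τ, ∀ y : Fin n → ℝ, 0 ≤ y ⬝ᵥ W u *ᵥ y} with hD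
    have hτD : τ ∈ D := by
      refine ⟨⟨ht, le_refl τ⟩, ?_⟩
      intro u hu y
      have huτ : u = τ := le_antisymm hu.2 hu.1
      subst huτ
      rw [hWform]
      have h1 : y ⬝ᵥ (Pstar u - P u) *ᵥ y = y ⬝ᵥ Pstar u *ᵥ y := by rw [hPf]; simp
      rw [h1]
      have h2 : 0 ≤ y ⬝ᵥ Pstar u *ᵥ y := by
        have := (hPstarPsd u).dotProduct_mulVec_nonneg y
        simpa using this
      have h3 : 0 ≤ ε * e u * ∑ i, y i ^ 2 := by
        have : (0:ℝ) ≤ ∑ i, y i ^ 2 := Finset.sum_nonneg fun i _ => sq_nonneg _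
        positivity
      linarith
    have hDbdd : BddBelow D := ⟨t, fun s hs => hs.1.1⟩
    have hDne : D.Nonempty := ⟨τ, hτD⟩
    set σ : ℝ := sInf D with hσ
    have hσmem : σ ∈ Set.Icc t τ :=
      ⟨le_csInf hDne fun s hs => hs.1.1, csInf_le hDbdd hτD⟩
    have hposR : ∀ u, σ < u → u ≤ τ → ∀ y : Fin n → ℝ, 0 ≤ y ⬝ᵥ W u *ᵥ y := by
      intro u hlt hle y
      obtain ⟨s, hsD, hslt⟩ := exists_lt_of_csInf_lt hDne hlt
      exact hsD.2 u ⟨hslt.le, hle⟩ y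
    have hpsdStar : ∀ y : Fin n → ℝ, 0 ≤ y ⬝ᵥ W σ *ᵥ y := by
      intro y
      rcases eq_or_lt_of_le hσmem.2 with heq | hlt
      · rw [heq]
        exact hτD.2 τ ⟨le_refl _, le_refl _⟩ y
      · have hc : ContinuousWithinAt (fun u => y ⬝ᵥ W u *ᵥ y) (Set.Ioc σ τ) σ :=
          (hWcont y σ hσmem).mono fun u hu => ⟨le_trans hσmem.1 hu.1.le, hu.2⟩
        have hc2 : Tendsto (fun u => y ⬝ᵥ W u *ᵥ y) (𝓝[>] σ) (𝓝 (y ⬝ᵥ W σ *ᵥ y)) := by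
          rw [← nhdsWithin_Ioc_eq_nhdsGT hlt]
          exact hc
        refine ge_of_tendsto hc2 ?_
        filter_upwards [Ioc_mem_nhdsGT_of_mem ⟨le_refl σ, hlt⟩] with u hu
        exact hposR u hu.1 hu.2 y
    by_cases hpd : ∀ y : Fin n → ℝ, y ≠ 0 → 0 < y ⬝ᵥ W σ *ᵥ y
    · -- positive definite at σ : deduce σ = t
      have hσt : σ = t := by
        by_contra hne
        have htlt : t < σ := lt_of_le_of_ne hσmem.1 (Ne.symm hne)
        obtain ⟨c, hcpos, hcform⟩ := posdef_margin (W σ) hpd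
        set F : ℝ → ℝ := fun u => ∑ i, ∑ j, |W u i j - W σ i j| with hF
        have hFcont : ContinuousOn F (Set.Icc t τ) :=
          continuousOn_finset_sum _ fun i _ => continuousOn_finset_sum _ fun j _ =>
            ((hWentry i j).sub continuousOn_const).abs
        have hF0 : F σ = 0 := by simp [hF]
        have hev : ∀ᶠ u in 𝓝[Set.Icc t τ] σ, F u < c / (n + 1) := by
          have h5 : Tendsto F (𝓝[Set.Icc t τ] σ) (𝓝 (F σ)) := hFcont σ hσmem
          refine h5.eventually_lt_const ?_
          rw [hF0]; positivity
        rw [Filter.eventually_iff, Metric.mem_nhdsWithin_iff] at hev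
        obtain ⟨δ, hδpos, hδ⟩ := hev
        set s'' : ℝ := max t (σ - δ/2) with hs''
        have hs''lt : s'' < σ := max_lt htlt (by linarith)
        have hs''D : s'' ∈ D := by
          refine ⟨⟨le_max_left _ _, le_trans hs''lt.le hσmem.2⟩, ?_⟩
          intro u hu y
          rcases lt_trichotomy u σ with hult | heq | hgt
          · have humem : u ∈ Set.Icc t τ := ⟨le_trans (le_max_left t _) hu.1, hu.2⟩
            have hu2 : σ - δ/2 ≤ u := le_trans (le_max_right t _) hu.1
            have hball : u ∈ Metric.ball σ δ := by
              rw [Metric.mem_ball, Real.dist_eq, abs_lt]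
              constructor <;> linarith
            have hFu : F u < c / (n + 1) := hδ ⟨hball, humem⟩
            have hentry : ∀ i j, |W u i j - W σ i j| ≤ c / (n + 1) := by
              intro i j
              refine le_trans ?_ hFu.le
              calc |W u i j - W σ i j| ≤ ∑ j', |W u i j' - W σ i j'| :=
                    Finset.single_le_sum (f := fun j' => |W u i j' - W σ i j'|)
                      (fun _ _ => abs_nonneg _) (Finset.mem_univ j)
              _ ≤ F u :=
                    Finset.single_le_sum (f := fun i' => ∑ j', |W u i' j' - W σ i' j'|)
                      (fun _ _ => Finset.sum_nonneg fun _ _ => abs_nonneg _) (Finset.mem_univ i)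
            have hdiff := abs_quadratic_le (W u - W σ) (c := c / (n + 1)) (by positivity)
              (fun i j => by simpa [Matrix.sub_apply] using hentry i j) y
            have hdec : y ⬝ᵥ W u *ᵥ y = y ⬝ᵥ W σ *ᵥ y + y ⬝ᵥ (W u - W σ) *ᵥ y := by
              rw [sub_mulVec, dotProduct_sub]; ring_nf
            have h1 := hcform y
            have hnn : (0:ℝ) ≤ ∑ i, y i ^ 2 := Finset.sum_nonneg fun i _ => sq_nonneg _
            have h2 := (abs_le.mp hdiff).1
            have h3 : c / (n+1) * n * (∑ i, y i ^ 2) ≤ c * ∑ i, y i ^ 2 := by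
              have hfrac : c / (n+1) * n ≤ c := by
                rw [div_mul_eq_mul_div, div_le_iff₀ (by positivity : (0:ℝ) < n + 1)]
                nlinarith
              exact mul_le_mul_of_nonneg_right hfrac hnn
            rw [hdec]
            linarith
          · subst heq; exact hpsdStar y
          · exact hposR u hgt hu.2 y
        have := csInf_le hDbdd hs''D
        rw [← hσ] at this
        linarith
      have := hpsdStar x
      rw [hσt, hWform] at this
      calc (0:ℝ) ≤ x ⬝ᵥ (Pstar t - P t) *ᵥ x + (ε * e t) * ∑ i, x i ^ 2 := this
      _ = x ⬝ᵥ (Pstar t - P t) *ᵥ x + ε * Real.exp (K' * (τ - t)) * ∑ i, x i ^ 2 := by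
          rw [he]
    · -- kernel vector at σ : contradiction with the Riccati structure
      exfalso
      push_neg at hpd
      obtain ⟨y, hy0, hyform⟩ := hpd
      have hyzero : y ⬝ᵥ W σ *ᵥ y = 0 := le_antisymm hyform (hpsdStar y)
      have hsumy : 0 < ∑ i, y i ^ 2 := sum_sq_pos_of_ne_zero hy0
      have hσltτ : σ < τ := by
        rcases eq_or_lt_of_le hσmem.2 with heq | h
        · exfalso
          rw [heq, hWform] at hyzero
          have h1 : 0 < ε * e τ * ∑ i, y i ^ 2 := by positivity
          have h2 : 0 ≤ y ⬝ᵥ (Pstar τ - P τ) *ᵥ y := by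
            rw [hPf, sub_zero]
            simpa using (hPstarPsd τ).dotProduct_mulVec_nonneg y
          linarith
        · exact h
      have hΔT : (Pstar σ - P σ)ᵀ = Pstar σ - P σ := by
        rw [transpose_sub, hPstarT, hPsymm σ hσmem.2]
      have hWherm : (W σ).IsHermitian := by
        rw [Matrix.IsHermitian, conjTranspose_eq_transpose_of_trivial, hW]
        rw [transpose_add, transpose_smul, transpose_one, hΔT]
      have hWpsd : (W σ).PosSemidef :=
          Matrix.PosSemidef.of_dotProduct_mulVec_nonneg hWherm fun z => by simpa using hpsdStar z
      have hker : W σ *ᵥ y = 0 := by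
        have := (hWpsd.dotProduct_mulVec_zero_iff y).1 (by simpa using hyzero)
        exact this
      set lam : ℝ := ε * e σ with hlam
      have hlampos : 0 < lam := by positivity
      have heig : (Pstar σ - P σ) *ᵥ y = (-lam) • y := by
        have hsplit : W σ *ᵥ y = (Pstar σ - P σ) *ᵥ y + lam • y := by
          rw [hW, add_mulVec, smul_mulVec, one_mulVec]
        rw [hsplit] at hker
        rw [neg_smul]
        exact eq_neg_of_add_eq_zero_left hker
      have hvec : y ᵥ* (Pstar σ - P σ) = (-lam) • y := by
        have := vecMul_transpose (Pstar σ - P σ) y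
        rw [hΔT] at this
        rw [this, heig]
      -- derivative data
      set Ψs : Matrix (Fin n) (Fin n) ℝ :=
        -((A σ)ᵀ * Pstar σ + Pstar σ * A σ - Pstar σ * B σ * (R σ)⁻¹ * (B σ)ᵀ * Pstar σ
          + (C σ)ᵀ * C σ) with hΨs
      set Ψp : Matrix (Fin n) (Fin n) ℝ :=
        -((A σ)ᵀ * P σ + P σ * A σ - P σ * B σ * (R σ)⁻¹ * (B σ)ᵀ * P σ
          + (C σ)ᵀ * C σ) with hΨp
      set H : ℝ := y ⬝ᵥ (Ψs - Ψp) *ᵥ y + (ε * (e σ * (-K'))) * ∑ i, y i ^ 2 with hH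
      set h : ℝ → ℝ := fun u => y ⬝ᵥ W u *ᵥ y with hh
      have hederiv : HasDerivAt e (e σ * (-K')) σ := by
        have hinner : HasDerivAt (fun u : ℝ => K' * (τ - u)) (-K') σ := by
          have := ((hasDerivAt_id σ).const_sub τ).const_mul K'
          simpa using this
        simpa using hinner.exp
      have expand2 : ∀ (N : Matrix (Fin n) (Fin n) ℝ) (c : ℝ),
          ∑ i, ∑ j, y i * (N i j + c * (1 : Matrix (Fin n) (Fin n) ℝ) i j) * y j
          = y ⬝ᵥ N *ᵥ y + c * ∑ i, y i ^ 2 := by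
        intro N c
        have hsplit : ∀ i j : Fin n, y i * (N i j + c * (1 : Matrix (Fin n) (Fin n) ℝ) i j) * y j
            = y i * N i j * y j + y i * (c * (1 : Matrix (Fin n) (Fin n) ℝ) i j) * y j := by
          intro i j; ring
        simp_rw [hsplit, Finset.sum_add_distrib]
        congr 1
        · exact (dot_expand N y).symm
        · have hdiag : ∀ i : Fin n, ∑ j, y i * (c * (1 : Matrix (Fin n) (Fin n) ℝ) i j) * y j
              = c * y i ^ 2 := by
            intro i
            rw [Finset.sum_eq_single i]
            · rw [one_apply_eq]; ring
            · intro j _ hj; rw [one_apply_ne (Ne.symm hj)]; ring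
            · intro hmem; exact absurd (Finset.mem_univ i) hmem
          simp_rw [hdiag]
          rw [Finset.mul_sum]
      have hhderiv : HasDerivAt h H σ := by
        have hexpand : h = fun u => ∑ i, ∑ j, y i * W u i j * y j := by
          funext u; exact dot_expand _ _
        rw [hexpand]
        have hterm : ∀ i j, HasDerivAt (fun u => y i * W u i j * y j)
            (y i * ((Ψs - Ψp) i j + (ε * (e σ * (-K'))) * (1 : Matrix (Fin n) (Fin n) ℝ) i j)
              * y j) σ := by
          intro i j
          have hWd : HasDerivAt (fun u => W u i j)
              ((Ψs - Ψp) i j + (ε * (e σ * (-K'))) * (1 : Matrix (Fin n) (Fin n) ℝ) i j) σ := by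
            have hWentry_eq : (fun u => W u i j) = fun u =>
                (Pstar u i j - P u i j) + (ε * e u) * (1 : Matrix (Fin n) (Fin n) ℝ) i j := by
              funext u
              simp [hW, Matrix.add_apply, Matrix.sub_apply, Matrix.smul_apply, smul_eq_mul]
            rw [hWentry_eq]
            have h1 : HasDerivAt (fun u => Pstar u i j) (Ψs i j) σ := hPstar σ trivial i j
            have h2 : HasDerivAt (fun u => P u i j) (Ψp i j) σ := hP σ hσmem.2 i j
            have h3 : HasDerivAt (fun u => (ε * e u) * (1 : Matrix (Fin n) (Fin n) ℝ) i j)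
                ((ε * (e σ * (-K'))) * (1 : Matrix (Fin n) (Fin n) ℝ) i j) σ :=
              ((hederiv.const_mul ε).mul_const _)
            have h4 := (h1.sub h2).add h3
            convert h4 using 2
            all_goals rfl
          exact (hWd.const_mul (y i)).mul_const (y j)
        have hsum := HasDerivAt.fun_sum (u := Finset.univ)
          (A := fun i u => ∑ j, y i * W u i j * y j)
          (A' := fun i => ∑ j, y i * ((Ψs - Ψp) i j
            + (ε * (e σ * (-K'))) * (1 : Matrix (Fin n) (Fin n) ℝ) i j) * y j)
          (fun i _ => HasDerivAt.fun_sum (fun j _ => hterm i j))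
        refine hsum.congr_deriv (Eq.symm ?_)
        rw [hH]
        exact (expand2 (Ψs - Ψp) (ε * (e σ * (-K')))).symm
      -- the derivative is nonnegative (h has a minimum at σ from the right)
      have hH0 : 0 ≤ H := by
        have hslope := hasDerivAt_iff_tendsto_slope.1 hhderiv
        have hmono : 𝓝[>] σ ≤ 𝓝[≠] σ :=
          nhdsWithin_mono _ fun u hu => Set.mem_compl_singleton_iff.2 (ne_of_gt hu)
        refine ge_of_tendsto (hslope.mono_left hmono) ?_
        filter_upwards [Ioc_mem_nhdsGT_of_mem ⟨le_refl σ, hσltτ⟩] with u hu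
        rw [slope_def_field]
        have h1 : 0 ≤ h u := hposR u hu.1 hu.2 y
        have h2 : h σ = 0 := hyzero
        rw [h2, sub_zero]
        exact div_nonneg h1 (by linarith [hu.1])
      -- but the derivative is negative: contradiction
      have matIdent2 : Ψs - Ψp = -((A σ)ᵀ * (Pstar σ - P σ)) - (Pstar σ - P σ) * A σ
          + (Pstar σ - P σ) * Sm σ * Pstar σ + P σ * Sm σ * (Pstar σ - P σ) := by
        simp only [hΨs, hΨp, hSm, Matrix.mul_sub, Matrix.sub_mul, Matrix.mul_assoc]
        abel
      have q1 : y ⬝ᵥ ((A σ)ᵀ * (Pstar σ - P σ)) *ᵥ y = -lam * (y ⬝ᵥ (A σ)ᵀ *ᵥ y) := by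
        rw [← mulVec_mulVec, heig, mulVec_smul, dotProduct_smul, smul_eq_mul]
      have q2 : y ⬝ᵥ ((Pstar σ - P σ) * A σ) *ᵥ y = -lam * (y ⬝ᵥ A σ *ᵥ y) := by
        rw [← mulVec_mulVec, dotProduct_mulVec, hvec, smul_dotProduct, smul_eq_mul]
      have q3 : y ⬝ᵥ ((Pstar σ - P σ) * Sm σ * Pstar σ) *ᵥ y
          = -lam * (y ⬝ᵥ (Sm σ * Pstar σ) *ᵥ y) := by
        rw [Matrix.mul_assoc, ← mulVec_mulVec, dotProduct_mulVec, hvec, smul_dotProduct,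
          smul_eq_mul]
      have q4 : y ⬝ᵥ (P σ * Sm σ * (Pstar σ - P σ)) *ᵥ y
          = -lam * (y ⬝ᵥ (P σ * Sm σ) *ᵥ y) := by
        rw [← mulVec_mulVec, heig, mulVec_smul, dotProduct_smul, smul_eq_mul]
      have hquad : y ⬝ᵥ (Ψs - Ψp) *ᵥ y = lam * (y ⬝ᵥ Mf σ *ᵥ y) := by
        rw [matIdent2]
        simp only [add_mulVec, sub_mulVec, neg_mulVec, dotProduct_add, dotProduct_sub,
          dotProduct_neg]
        rw [q1, q2, q3, q4]
        simp only [hMf]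
        simp only [add_mulVec, sub_mulVec, dotProduct_add, dotProduct_sub]
        ring
      have hboundq := abs_quadratic_le (Mf σ) hcM0 (fun i j => hcM σ hσmem i j) y
      have hHval : H = lam * (y ⬝ᵥ Mf σ *ᵥ y) - K' * lam * ∑ i, y i ^ 2 := by
        rw [hH, hquad, hlam]; ring
      have hHlt : H < 0 := by
        have h5 : lam * (y ⬝ᵥ Mf σ *ᵥ y) ≤ lam * (cM * n * ∑ i, y i ^ 2) :=
          mul_le_mul_of_nonneg_left ((le_abs_self _).trans hboundq) hlampos.le
        have h6 : K' * lam * ∑ i, y i ^ 2 = (n * cM + 1) * lam * ∑ i, y i ^ 2 := by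
          rw [hK']
        rw [hHval, h6]
        nlinarith [hsumy, hlampos]
      linarith
  -- conclude from hkey
  by_contra hneg
  push_neg at hneg
  have hx0 : x ≠ 0 := by
    rintro rfl
    simp at hneg
  have hsum : 0 < ∑ i, x i ^ 2 := sum_sq_pos_of_ne_zero hx0
  set E : ℝ := Real.exp (K' * (τ - t)) with hE
  have hEpos : 0 < E := Real.exp_pos _
  set ε : ℝ := -(x ⬝ᵥ (Pstar t - P t) *ᵥ x) / (2 * E * ∑ i, x i ^ 2) with hε
  have hεpos : 0 < ε := by
    apply div_pos (by linarith) (by positivity)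
  have := hkey ε hεpos
  rw [hε] at this
  have hcompute : -(x ⬝ᵥ (Pstar t - P t) *ᵥ x) / (2 * E * ∑ i, x i ^ 2) * E * ∑ i, x i ^ 2
      = -(x ⬝ᵥ (Pstar t - P t) *ᵥ x) / 2 := by
    field_simp
  rw [hcompute] at this
  linarith
end

section
/- Let T > 0, ω = 2π/T, let s₀ ≤ s₁ be reals, and let f : ℝ × ℝ → ℝ be jointly continuous with f(s, t + T) = f(s, t) for all s, t, and suppose there exists L ≥ 0 such that |f(s, t) − f(s, t')| ≤ L|t − t'| for all s ∈ [s₀, s₁] and all t, t' ∈ ℝ. For N ∈ ℕ let S_N(s, t) = a₀(s)/2 + Σ_{i=1}^N (a_i(s) cos(iωt) + b_i(s) sin(iωt)), where a_i(s) = (2/T)∫_{−T/2}^{T/2} f(s,t) cos(iωt) dt and b_i(s) = (2/T)∫_{−T/2}^{T/2} f(s,t) sin(iωt) dt. Then sup_{s ∈ [s₀,s₁], t ∈ ℝ} |S_N(s, t) − f(s, t)| → 0 as N → ∞. (Content of part 1 of the paper's Lemma 5: the Fourier truncation errors of a uniformly Lipschitz periodic family converge to zero uniformly in both arguments.) -/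
open Filter Topology MeasureTheory

/-- The `i`-th cosine Fourier coefficient (in the second argument) of a parametrized
`T`-periodic function, at parameter value `s`. -/
noncomputable def fourierA (T ω : ℝ) (f : ℝ × ℝ → ℝ) (i : ℕ) (s : ℝ) : ℝ :=
  (2 / T) * ∫ t in (-(T / 2))..(T / 2), f (s, t) * Real.cos (i * ω * t)

/-- The `i`-th sine Fourier coefficient (in the second argument) of a parametrized
`T`-periodic function, at parameter value `s`. -/
noncomputable def fourierB (T ω : ℝ) (f : ℝ × ℝ → ℝ) (i : ℕ) (s : ℝ) : ℝ :=
  (2 / T) * ∫ t in (-(T / 2))..(T / 2), f (s, t) * Real.sin (i * ω * t)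

/-- The `N`-th Fourier partial sum (in the second argument) of a parametrized
`T`-periodic function. -/
noncomputable def fourierPartialSum (T ω : ℝ) (f : ℝ × ℝ → ℝ) (N : ℕ) (s t : ℝ) : ℝ :=
  fourierA T ω f 0 s / 2 +
    ∑ i ∈ Finset.Icc 1 N, (fourierA T ω f i s * Real.cos (i * ω * t) +
      fourierB T ω f i s * Real.sin (i * ω * t))


theorem fourier_apply_add' {T : ℝ} (n : ℤ) (x y : AddCircle T) :
    (fourier n (x + y) : ℂ) = fourier n x * fourier n y := by
  simp only [fourier_apply, smul_add, AddCircle.toCircle_add, Circle.coe_mul]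

theorem fourierCoeff_translate {T : ℝ} [hT : Fact (0 < T)] (F : C(AddCircle T, ℂ))
    (a : AddCircle T) (n : ℤ) :
    fourierCoeff (fun x => F (x + a)) n = fourier n a * fourierCoeff F n := by
  have h := integral_add_right_eq_self (μ := AddCircle.haarAddCircle)
      (fun x : AddCircle T => fourier (-n) (x - a) • F x) a
  simp only [add_sub_cancel_right] at h
  have key : ∀ x : AddCircle T,
      (fourier (-n) (x - a) : ℂ) • F x = (fourier n a : ℂ) • ((fourier (-n) x : ℂ) • F x) := by
    intro x
    rw [smul_smul, sub_eq_add_neg, fourier_apply_add']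
    congr 1
    rw [mul_comm]
    congr 1
    simp [fourier_apply]
  calc fourierCoeff (fun x => F (x + a)) n
      = ∫ x : AddCircle T, fourier (-n) (x - a) • F x ∂AddCircle.haarAddCircle := by
        rw [fourierCoeff, ← h]
    _ = (fourier n a : ℂ) • ∫ x : AddCircle T, fourier (-n) x • F x ∂AddCircle.haarAddCircle := by
        simp_rw [key]; exact integral_smul _ _
    _ = fourier n a * fourierCoeff F n := rfl

theorem bessel_bound {T : ℝ} [hT : Fact (0 < T)] (H : C(AddCircle T, ℂ)) (M : ℝ) (hM : 0 ≤ M)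
    (hb : ∀ x : AddCircle T, ‖H x‖ ≤ M) (v : Finset ℤ) :
    ∑ n ∈ v, ‖fourierCoeff (⇑H) n‖ ^ 2 ≤ M ^ 2 := by
  set x : Lp ℂ 2 (AddCircle.haarAddCircle) := H.toLp 2 AddCircle.haarAddCircle ℂ with hx
  have h1 : ∀ n, fourierCoeff (⇑H) n = fourierBasis.repr x n := by
    intro n
    rw [fourierBasis_repr]
    exact (fourierCoeff_toLp H n).symm
  have h2 : ∑ n ∈ v, ‖fourierCoeff (⇑H) n‖ ^ 2 ≤ ‖x‖ ^ 2 := by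
    simp_rw [h1]
    simp_rw [fourierBasis.repr_apply_apply]
    exact fourierBasis.orthonormal.sum_inner_products_le x
  refine h2.trans ?_
  have hae : ∀ᵐ y ∂(AddCircle.haarAddCircle (T := T)), ‖x y‖ ≤ M := by
    filter_upwards [ContinuousMap.coeFn_toLp (p := 2) (𝕜 := ℂ) AddCircle.haarAddCircle H] with y hy
    rw [hy]; exact hb y
  have h3 := Lp.norm_le_of_ae_bound hM hae
  have h4 : (measureUnivNNReal (AddCircle.haarAddCircle (T := T)) : ℝ) = 1 := by
    simp [measureUnivNNReal]
  rw [h4, Real.one_rpow, one_mul] at h3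
  exact pow_le_pow_left₀ (norm_nonneg _) h3 2


theorem fourier_sub_one_sq {T : ℝ} [hT : Fact (0 < T)] (n : ℤ) (j : ℕ)
    (h1 : (2:ℤ)^j ≤ |n|) (h2 : |n| < (2:ℤ)^(j+1)) :
    2 ≤ ‖(fourier n ((T / 2^(j+2) : ℝ) : AddCircle T) : ℂ) - 1‖ ^ 2 := by
  have hTpos := hT.out
  set θ : ℝ := Real.pi * n / 2^(j+1) with hθ
  have hfour : (fourier n ((T / 2^(j+2) : ℝ) : AddCircle T) : ℂ) = Complex.exp (θ * Complex.I) := by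
    rw [fourier_coe_apply, hθ]
    congr 1
    push_cast
    field_simp [hTpos.ne']
    ring
  rw [hfour, Complex.exp_mul_I]
  have hre : (Complex.cos θ + Complex.sin θ * Complex.I - 1).re = Real.cos θ - 1 := by
    simp [Complex.cos_ofReal_re, Complex.sin_ofReal_im]
  have him : (Complex.cos θ + Complex.sin θ * Complex.I - 1).im = Real.sin θ := by
    simp [Complex.cos_ofReal_im, Complex.sin_ofReal_re]
  have hnorm : ‖Complex.cos θ + Complex.sin θ * Complex.I - 1‖ ^ 2
      = (Real.cos θ - 1)^2 + (Real.sin θ)^2 := by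
    rw [Complex.sq_norm, Complex.normSq_apply, hre, him]; ring
  rw [hnorm]
  have hpyth := Real.sin_sq_add_cos_sq θ
  have hj1 : (0:ℝ) < 2^(j+1) := by positivity
  have hcos : Real.cos θ ≤ 0 := by
    rw [← Real.cos_abs θ]
    apply Real.cos_nonpos_of_pi_div_two_le_of_le
    · have hn : (2:ℝ)^j ≤ |(n:ℝ)| := by exact_mod_cast h1
      rw [hθ, abs_div, abs_mul, _root_.abs_of_nonneg Real.pi_pos.le,
        _root_.abs_of_nonneg hj1.le]
      rw [div_le_div_iff₀ (by norm_num) hj1]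
      have h2j : (2:ℝ)^(j+1) = 2*2^j := by ring
      nlinarith [Real.pi_pos]
    · have hn : |(n:ℝ)| ≤ 2^(j+1) := by exact_mod_cast h2.le
      rw [hθ, abs_div, abs_mul, _root_.abs_of_nonneg Real.pi_pos.le,
        _root_.abs_of_nonneg hj1.le]
      rw [div_le_iff₀ hj1]
      nlinarith [Real.pi_pos, hj1]
  nlinarith


section Aux
variable {T : ℝ} [hT : Fact (0 < T)] {g : ℝ → ℝ} {F : C(AddCircle T, ℂ)} {L : ℝ}

theorem block_l2 (hF : ∀ x : ℝ, F x = (g x : ℂ)) (hL : 0 ≤ L)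
    (hg : ∀ t t' : ℝ, |g t - g t'| ≤ L * |t - t'|) (j : ℕ) (v : Finset ℤ)
    (hv : ∀ n ∈ v, (2:ℤ)^j ≤ |n| ∧ |n| < (2:ℤ)^(j+1)) :
    2 * ∑ n ∈ v, ‖fourierCoeff (⇑F) n‖ ^ 2 ≤ (L * (T / 2^(j+2)))^2 := by
  have hTpos := hT.out
  set h : ℝ := T / 2^(j+2) with hh
  have hhpos : 0 < h := by positivity
  set a : AddCircle T := (h : AddCircle T) with ha
  set G : C(AddCircle T, ℂ) := ⟨fun x => F (x + a) - F x,
    (F.continuous.comp (continuous_id.add continuous_const)).sub F.continuous⟩ with hG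
  have hGcoeff : ∀ n : ℤ, fourierCoeff (⇑G) n
      = ((fourier n a : ℂ) - 1) * fourierCoeff (⇑F) n := by
    intro n
    have i1 : Integrable (fun x : AddCircle T => (fourier (-n) x : ℂ) • F (x + a))
        AddCircle.haarAddCircle :=
      (((fourier (-n)).continuous).smul
        (F.continuous.comp (continuous_id.add continuous_const))).integrable_of_hasCompactSupport
        (HasCompactSupport.of_compactSpace _)
    have i2 : Integrable (fun x : AddCircle T => (fourier (-n) x : ℂ) • F x)
        AddCircle.haarAddCircle :=
      (((fourier (-n)).continuous).smul F.continuous).integrable_of_hasCompactSupport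
        (HasCompactSupport.of_compactSpace _)
    have hsub : fourierCoeff (⇑G) n
        = fourierCoeff (fun x => F (x + a)) n - fourierCoeff (⇑F) n := by
      rw [fourierCoeff, fourierCoeff, fourierCoeff, ← integral_sub i1 i2]
      congr 1; ext x; simp only [hG, ContinuousMap.coe_mk, smul_sub]
    rw [hsub, fourierCoeff_translate, sub_mul, one_mul]
  have hGbound : ∀ x : AddCircle T, ‖G x‖ ≤ L * h := by
    intro x
    induction x using QuotientAddGroup.induction_on with
    | H y =>
      have : G (y : AddCircle T) = ((g (y + h) : ℂ) - (g y : ℂ)) := by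
        have hya : ((y : AddCircle T) + a) = ((y + h : ℝ) : AddCircle T) := by
          rw [ha, ← AddCircle.coe_add]
        simp only [hG, ContinuousMap.coe_mk, hya, hF]
      rw [this, ← Complex.ofReal_sub]
      rw [Complex.norm_real]
      have := hg (y + h) y
      simpa using this.trans (by rw [add_sub_cancel_left, _root_.abs_of_nonneg hhpos.le])
  have hbessel := bessel_bound G (L * h) (by positivity) hGbound v
  calc 2 * ∑ n ∈ v, ‖fourierCoeff (⇑F) n‖ ^ 2
      = ∑ n ∈ v, 2 * ‖fourierCoeff (⇑F) n‖ ^ 2 := by rw [Finset.mul_sum]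
    _ ≤ ∑ n ∈ v, ‖fourierCoeff (⇑G) n‖ ^ 2 := by
        apply Finset.sum_le_sum
        intro n hn
        rw [hGcoeff n, norm_mul, mul_pow]
        have hlow := fourier_sub_one_sq (T := T) n j (hv n hn).1 (hv n hn).2
        rw [← ha] at hlow
        nlinarith [sq_nonneg ‖fourierCoeff (⇑F) n‖, norm_nonneg (fourierCoeff (⇑F) n)]
    _ ≤ (L * h)^2 := hbessel

theorem block_l1 (hF : ∀ x : ℝ, F x = (g x : ℂ)) (hL : 0 ≤ L)
    (hg : ∀ t t' : ℝ, |g t - g t'| ≤ L * |t - t'|) (j : ℕ) (v : Finset ℤ)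
    (hv : ∀ n ∈ v, (2:ℤ)^j ≤ |n| ∧ |n| < (2:ℤ)^(j+1)) :
    ∑ n ∈ v, ‖fourierCoeff (⇑F) n‖ ≤ (L * T / 2) * ((Real.sqrt 2)⁻¹)^j := by
  have hTpos := hT.out
  set S := ∑ n ∈ v, ‖fourierCoeff (⇑F) n‖ with hS
  have hSnonneg : 0 ≤ S := Finset.sum_nonneg fun n _ => norm_nonneg _
  have hcard : (v.card : ℝ) ≤ 2^(j+3) := by
    have hsub : v ⊆ Finset.Icc (-(2^(j+1)):ℤ) (2^(j+1)) := by
      intro n hn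
      rw [Finset.mem_Icc]
      have := (hv n hn).2.le
      constructor <;> [linarith [neg_abs_le n]; linarith [le_abs_self n]]
    have h1 : v.card ≤ (Finset.Icc (-(2^(j+1)):ℤ) (2^(j+1))).card := Finset.card_le_card hsub
    have h2 : (Finset.Icc (-(2^(j+1)):ℤ) (2^(j+1))).card = 2^(j+2)+1 := by
      have heq : (2^(j+1)+1 - -(2^(j+1)) : ℤ) = ((2^(j+2)+1 : ℕ) : ℤ) := by push_cast; ring
      rw [Int.card_Icc, heq, Int.toNat_natCast]
    have hnat : 2^(j+2)+1 ≤ 2^(j+3) := by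
      have h1p := Nat.one_le_two_pow (n := j+2)
      have : 2^(j+3) = 2*2^(j+2) := by rw [pow_succ]; ring
      omega
    calc (v.card : ℝ) ≤ ((2^(j+3) : ℕ) : ℝ) := by exact_mod_cast (h1.trans_eq h2).trans hnat
      _ = 2^(j+3) := by push_cast; ring
  have hsq : S^2 ≤ (v.card : ℝ) * ∑ n ∈ v, ‖fourierCoeff (⇑F) n‖^2 :=
    sq_sum_le_card_mul_sum_sq
  have hl2 := block_l2 hF hL hg j v hv
  set B := (L * T / 2) * ((Real.sqrt 2)⁻¹)^j with hB
  have hBnonneg : 0 ≤ B := by positivity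
  have hB2 : B^2 = (L*T/2)^2 * (1/2)^j := by
    rw [hB, mul_pow, ← pow_mul, mul_comm j 2, pow_mul, inv_pow, Real.sq_sqrt (by norm_num : (0:ℝ) ≤ 2)]
    norm_num
  have hmain : S^2 ≤ B^2 := by
    have hsum_nonneg : 0 ≤ ∑ n ∈ v, ‖fourierCoeff (⇑F) n‖^2 :=
      Finset.sum_nonneg fun n _ => sq_nonneg _
    have step : S^2 ≤ (2:ℝ)^(j+3) * ((L * (T / 2^(j+2)))^2 / 2) := by
      calc S^2 ≤ (v.card : ℝ) * ∑ n ∈ v, ‖fourierCoeff (⇑F) n‖^2 := hsq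
        _ ≤ (2:ℝ)^(j+3) * ∑ n ∈ v, ‖fourierCoeff (⇑F) n‖^2 :=
            mul_le_mul_of_nonneg_right hcard hsum_nonneg
        _ ≤ (2:ℝ)^(j+3) * ((L * (T / 2^(j+2)))^2 / 2) := by
            apply mul_le_mul_of_nonneg_left _ (by positivity)
            linarith
    refine step.trans_eq ?_
    rw [hB2]
    have h2j2 : ((2:ℝ)^(j+2)) ≠ 0 := by positivity
    field_simp
    have h4 : (1/2:ℝ)^j * 2^(j*2) = 2^j := by
      rw [pow_mul', ← mul_pow]; norm_num
    linear_combination (-(L^2*16)) * h4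
  calc S = Real.sqrt (S^2) := (Real.sqrt_sq hSnonneg).symm
    _ ≤ Real.sqrt (B^2) := Real.sqrt_le_sqrt hmain
    _ = B := Real.sqrt_sq hBnonneg

theorem rconst_facts : (0:ℝ) ≤ (Real.sqrt 2)⁻¹ ∧ (Real.sqrt 2)⁻¹ ≤ 3/4 := by
  have h2 : (4:ℝ)/3 ≤ Real.sqrt 2 := by
    nlinarith [Real.sq_sqrt (show (0:ℝ) ≤ 2 by norm_num), Real.sqrt_nonneg 2]
  constructor
  · positivity
  · rw [inv_le_comm₀ (by positivity) (by norm_num)]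
    linarith

theorem tail_bound (hF : ∀ x : ℝ, F x = (g x : ℂ)) (hL : 0 ≤ L)
    (hg : ∀ t t' : ℝ, |g t - g t'| ≤ L * |t - t'|) (J : ℕ) (u : Finset ℤ)
    (hu : ∀ n ∈ u, (2:ℤ)^J ≤ |n|) :
    ∑ n ∈ u, ‖fourierCoeff (⇑F) n‖ ≤ 2 * L * T * ((Real.sqrt 2)⁻¹)^J := by
  have hTpos := hT.out
  obtain ⟨hr0, hr34⟩ := rconst_facts
  set r : ℝ := (Real.sqrt 2)⁻¹ with hr
  have hr1 : r < 1 := lt_of_le_of_lt hr34 (by norm_num)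
  have hne : ∀ n ∈ u, n ≠ 0 := by
    intro n hn h0
    have := hu n hn
    rw [h0] at this
    simp at this
    exact absurd this (not_le.mpr (by positivity))
  set φ : ℤ → ℕ := fun n => Nat.log 2 n.natAbs with hφ
  have habs : ∀ n : ℤ, (|n| : ℤ) = (n.natAbs : ℤ) := fun n => (Int.abs_eq_natAbs n)
  have hφJ : ∀ n ∈ u, J ≤ φ n := by
    intro n hn
    have h1 : (2:ℤ)^J ≤ (n.natAbs : ℤ) := by rw [← habs]; exact hu n hn
    have h2 : 2^J ≤ n.natAbs := by exact_mod_cast h1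
    exact (Nat.le_log_iff_pow_le (by norm_num) (Int.natAbs_ne_zero.mpr (hne n hn))).mpr h2
  set M := u.sup φ with hM
  have hmaps : ∀ n ∈ u, φ n ∈ Finset.Icc J M := by
    intro n hn
    exact Finset.mem_Icc.mpr ⟨hφJ n hn, Finset.le_sup hn⟩
  rw [← Finset.sum_fiberwise_of_maps_to hmaps]
  have hfiber : ∀ j ∈ Finset.Icc J M,
      ∑ n ∈ u.filter (fun n => φ n = j), ‖fourierCoeff (⇑F) n‖ ≤ (L * T / 2) * r^j := by
    intro j _
    apply block_l1 hF hL hg j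
    intro n hn
    rw [Finset.mem_filter] at hn
    have hn0 : n.natAbs ≠ 0 := Int.natAbs_ne_zero.mpr (hne n hn.1)
    have hlow : 2^j ≤ n.natAbs := by
      rw [← hn.2]; exact Nat.pow_log_le_self 2 hn0
    have hhigh : n.natAbs < 2^(j+1) := by
      rw [← hn.2]; exact Nat.lt_pow_succ_log_self (by norm_num) _
    constructor
    · rw [habs]; exact_mod_cast hlow
    · rw [habs]; exact_mod_cast hhigh
  calc ∑ j ∈ Finset.Icc J M, ∑ n ∈ u.filter (fun n => φ n = j), ‖fourierCoeff (⇑F) n‖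
      ≤ ∑ j ∈ Finset.Icc J M, (L * T / 2) * r^j := Finset.sum_le_sum hfiber
    _ = (L * T / 2) * ∑ j ∈ Finset.Icc J M, r^j := by rw [Finset.mul_sum]
    _ ≤ (L * T / 2) * (r^J * 4) := by
        apply mul_le_mul_of_nonneg_left _ (by positivity)
        have h1 : ∑ j ∈ Finset.Icc J M, r^j = r^J * ∑ i ∈ Finset.range (M+1-J), r^i := by
          rw [← Finset.Ico_add_one_right_eq_Icc, Finset.sum_Ico_eq_sum_range]
          rw [Finset.mul_sum]
          exact Finset.sum_congr rfl fun i _ => by rw [pow_add]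
        rw [h1]
        apply mul_le_mul_of_nonneg_left _ (by positivity)
        have h2 : ∑ i ∈ Finset.range (M+1-J), r^i ≤ (1-r)⁻¹ :=
          Summable.sum_le_tsum _ (fun i _ => by positivity)
            (summable_geometric_of_lt_one hr0 hr1) |>.trans_eq (tsum_geometric_of_lt_one hr0 hr1)
        refine h2.trans ?_
        rw [inv_le_comm₀ (by linarith) (by norm_num)]
        linarith
    _ = 2 * L * T * r^J := by ring

theorem fourier_norm_one {n : ℤ} {x : AddCircle T} : ‖(fourier n x : ℂ)‖ = 1 := by
  rw [fourier_apply]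
  exact Circle.norm_coe _

theorem coeff_norm_le (n : ℤ) : ‖fourierCoeff (⇑F) n‖ ≤ ‖F‖ := by
  rw [fourierCoeff]
  have := norm_integral_le_of_norm_le_const (μ := AddCircle.haarAddCircle (T := T))
    (C := ‖F‖) (f := fun t : AddCircle T => (fourier (-n) t : ℂ) • F t) ?_
  · simpa using this
  · apply Filter.Eventually.of_forall
    intro t
    rw [norm_smul, fourier_norm_one, one_mul]
    exact F.norm_coe_le_norm t

theorem coeff_summable (hF : ∀ x : ℝ, F x = (g x : ℂ)) (hL : 0 ≤ L)
    (hg : ∀ t t' : ℝ, |g t - g t'| ≤ L * |t - t'|) :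
    Summable (fun n : ℤ => ‖fourierCoeff (⇑F) n‖) := by
  have hTpos := hT.out
  apply summable_of_sum_le (c := ‖F‖ + 2*L*T) (fun n => norm_nonneg _)
  intro u
  classical
  rw [← Finset.sum_filter_add_sum_filter_not u (fun n => n = 0)]
  have h1 : ∑ n ∈ u.filter (fun n => n = 0), ‖fourierCoeff (⇑F) n‖ ≤ ‖F‖ := by
    calc ∑ n ∈ u.filter (fun n => n = 0), ‖fourierCoeff (⇑F) n‖
        ≤ ∑ n ∈ ({0} : Finset ℤ), ‖fourierCoeff (⇑F) n‖ := by
          apply Finset.sum_le_sum_of_subset_of_nonneg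
          · intro n hn
            rw [Finset.mem_filter] at hn
            simp [hn.2]
          · exact fun n _ _ => norm_nonneg _
      _ = ‖fourierCoeff (⇑F) 0‖ := Finset.sum_singleton _ _
      _ ≤ ‖F‖ := coeff_norm_le 0
  have h2 : ∑ n ∈ u.filter (fun n => ¬ n = 0), ‖fourierCoeff (⇑F) n‖ ≤ 2*L*T := by
    have := tail_bound hF hL hg 0 (u.filter (fun n => ¬ n = 0)) ?_
    · simpa using this
    · intro n hn
      rw [Finset.mem_filter] at hn
      simpa using Int.one_le_abs hn.2
  linarith

theorem partial_sum_error (hF : ∀ x : ℝ, F x = (g x : ℂ)) (hL : 0 ≤ L)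
    (hg : ∀ t t' : ℝ, |g t - g t'| ≤ L * |t - t'|) (J N : ℕ) (hJN : 2^J ≤ N)
    (x : AddCircle T) :
    ‖(∑ n ∈ Finset.Icc (-(N:ℤ)) N, fourierCoeff (⇑F) n • (fourier n x : ℂ)) - F x‖
      ≤ 2 * L * T * ((Real.sqrt 2)⁻¹)^J := by
  have hTpos := hT.out
  have hnormsum := coeff_summable hF hL hg
  have hsummable : Summable (fourierCoeff (⇑F)) := Summable.of_norm hnormsum
  have hterm : Summable (fun n : ℤ => fourierCoeff (⇑F) n • (fourier n x : ℂ)) := by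
    apply Summable.of_norm
    apply hnormsum.congr
    intro n
    rw [norm_smul, fourier_norm_one, mul_one]
  have hsum : HasSum (fun n : ℤ => fourierCoeff (⇑F) n • (fourier n x : ℂ)) (F x) :=
    has_pointwise_sum_fourier_series_of_summable hsummable x
  set s : Finset ℤ := Finset.Icc (-(N:ℤ)) N with hs
  have hsplit := Summable.sum_add_tsum_subtype_compl hterm s
  rw [hsum.tsum_eq] at hsplit
  have heq : (∑ n ∈ s, fourierCoeff (⇑F) n • (fourier n x : ℂ)) - F x
      = -(∑' (n : {n : ℤ // n ∉ s}), fourierCoeff (⇑F) (n : ℤ) • (fourier (n : ℤ) x : ℂ)) := by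
    rw [← hsplit]; ring
  rw [heq, norm_neg]
  have hns : Summable (fun n : ℤ => ‖fourierCoeff (⇑F) n • (fourier n x : ℂ)‖) :=
    hnormsum.congr fun n => by rw [norm_smul, fourier_norm_one, mul_one]
  have hsubnorm : Summable (fun n : {n : ℤ // n ∉ s} =>
      ‖fourierCoeff (⇑F) (n : ℤ) • (fourier (n : ℤ) x : ℂ)‖) :=
    hns.subtype _
  refine (norm_tsum_le_tsum_norm hsubnorm).trans ?_
  apply Summable.tsum_le_of_sum_le hsubnorm
  intro w
  have hmap : ∑ i ∈ w, ‖fourierCoeff (⇑F) (i : ℤ) • (fourier (i : ℤ) x : ℂ)‖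
      = ∑ n ∈ w.map (Function.Embedding.subtype _), ‖fourierCoeff (⇑F) n‖ := by
    rw [Finset.sum_map]
    apply Finset.sum_congr rfl
    intro i _
    rw [norm_smul, fourier_norm_one, mul_one]
    rfl
  rw [hmap]
  apply tail_bound hF hL hg J
  intro n hn
  rw [Finset.mem_map] at hn
  obtain ⟨⟨m, hm⟩, _, rfl⟩ := hn
  simp only [Function.Embedding.coe_subtype]
  simp only [hs, Finset.mem_Icc] at hm
  have hJN' : (2:ℤ)^J ≤ (N:ℤ) := by exact_mod_cast hJN
  have h1 : m ≤ |m| := le_abs_self m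
  have h2 : -|m| ≤ m := neg_abs_le m
  omega

end Aux

section Coeff
variable {T : ℝ} [hT : Fact (0 < T)] {ω : ℝ} {f : ℝ × ℝ → ℝ} {s : ℝ}
  {F : C(AddCircle T, ℂ)}

theorem coeff_int (hω : ω = 2 * Real.pi / T) (hF : ∀ x : ℝ, F x = (f (s, x) : ℂ))
    (hgc : Continuous fun x : ℝ => f (s, x)) (m : ℤ) :
    fourierCoeff (⇑F) m =
      (((2/T * ∫ x in (-(T/2))..(T/2), f (s,x) * Real.cos (m*ω*x)) : ℝ) -
        ((2/T * ∫ x in (-(T/2))..(T/2), f (s,x) * Real.sin (m*ω*x)) : ℝ) * Complex.I)/2 := by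
  have hTpos := hT.out
  have hend : -(T/2) + T = T/2 := by ring
  rw [fourierCoeff_eq_intervalIntegral (⇑F) m (-(T/2)), hend]
  have hpt : ∀ x : ℝ, (fourier (-m) (x : AddCircle T) : ℂ) • F x
      = ((f (s,x) * Real.cos (m*ω*x) : ℝ) : ℂ) - ((f (s,x) * Real.sin (m*ω*x) : ℝ) : ℂ) * Complex.I := by
    intro x
    have h1 : (fourier (-m) (x : AddCircle T) : ℂ) = Complex.exp ((-(m*ω*x) : ℝ) * Complex.I) := by
      rw [fourier_coe_apply]
      congr 1
      rw [hω]
      push_cast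
      field_simp
    rw [h1, Complex.exp_mul_I, hF x, smul_eq_mul]
    rw [← Complex.ofReal_cos, ← Complex.ofReal_sin, Real.cos_neg, Real.sin_neg]
    push_cast
    ring
  simp_rw [hpt]
  have hi1 : IntervalIntegrable (fun x => ((f (s,x) * Real.cos (m*ω*x) : ℝ) : ℂ)) volume (-(T/2)) (T/2) :=
    (Complex.continuous_ofReal.comp (hgc.mul (Real.continuous_cos.comp (by continuity)))).intervalIntegrable _ _
  have hi2 : IntervalIntegrable (fun x => ((f (s,x) * Real.sin (m*ω*x) : ℝ) : ℂ)) volume (-(T/2)) (T/2) :=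
    (Complex.continuous_ofReal.comp (hgc.mul (Real.continuous_sin.comp (by continuity)))).intervalIntegrable _ _
  rw [intervalIntegral.integral_sub hi1 (hi2.mul_const _)]
  rw [intervalIntegral.integral_mul_const, intervalIntegral.integral_ofReal,
    intervalIntegral.integral_ofReal]
  rw [Complex.real_smul]
  push_cast
  field_simp

theorem coeff_plus (hω : ω = 2 * Real.pi / T) (hF : ∀ x : ℝ, F x = (f (s, x) : ℂ))
    (hgc : Continuous fun x : ℝ => f (s, x)) (n : ℕ) :
    fourierCoeff (⇑F) (n:ℤ) =
      ((fourierA T ω f n s : ℂ) - (fourierB T ω f n s : ℂ) * Complex.I)/2 := by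
  rw [coeff_int hω hF hgc (n:ℤ)]
  simp only [Int.cast_natCast, fourierA, fourierB]

theorem coeff_neg (hω : ω = 2 * Real.pi / T) (hF : ∀ x : ℝ, F x = (f (s, x) : ℂ))
    (hgc : Continuous fun x : ℝ => f (s, x)) (n : ℕ) :
    fourierCoeff (⇑F) (-(n:ℤ)) =
      ((fourierA T ω f n s : ℂ) + (fourierB T ω f n s : ℂ) * Complex.I)/2 := by
  rw [coeff_int hω hF hgc (-(n:ℤ))]
  have hcos : ∀ x : ℝ, Real.cos ((↑(-(n:ℤ)) : ℝ) * ω * x) = Real.cos ((n:ℝ)*ω*x) := by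
    intro x
    push_cast
    rw [show (-(n:ℝ))*ω*x = -((n:ℝ)*ω*x) by ring, Real.cos_neg]
  have hsin : ∀ x : ℝ, f (s,x) * Real.sin ((↑(-(n:ℤ)) : ℝ) * ω * x)
      = -(f (s,x) * Real.sin ((n:ℝ)*ω*x)) := by
    intro x
    push_cast
    rw [show (-(n:ℝ))*ω*x = -((n:ℝ)*ω*x) by ring, Real.sin_neg]
    ring
  have e1 : (∫ x in (-(T/2))..(T/2), f (s,x) * Real.cos ((↑(-(n:ℤ)) : ℝ)*ω*x))
      = ∫ x in (-(T/2))..(T/2), f (s,x) * Real.cos ((n:ℝ)*ω*x) :=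
    intervalIntegral.integral_congr (fun x _ => by rw [hcos x])
  have e2 : (∫ x in (-(T/2))..(T/2), f (s,x) * Real.sin ((↑(-(n:ℤ)) : ℝ)*ω*x))
      = -∫ x in (-(T/2))..(T/2), f (s,x) * Real.sin ((n:ℝ)*ω*x) := by
    rw [← intervalIntegral.integral_neg]
    exact intervalIntegral.integral_congr (fun x _ => hsin x)
  rw [e1, e2]
  simp only [fourierA, fourierB]
  push_cast
  ring

omit hT in
theorem fourier_nat_coe (hω : ω = 2 * Real.pi / T) (hTpos : 0 < T) (n : ℕ) (t : ℝ) :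
    (fourier (n:ℤ) ((t : ℝ) : AddCircle T) : ℂ)
      = ((Real.cos ((n:ℝ)*ω*t) : ℝ) : ℂ) + ((Real.sin ((n:ℝ)*ω*t) : ℝ) : ℂ) * Complex.I := by
  have h1 : (fourier (n:ℤ) ((t:ℝ) : AddCircle T) : ℂ)
      = Complex.exp ((((n:ℝ)*ω*t) : ℝ) * Complex.I) := by
    rw [fourier_coe_apply]
    congr 1
    rw [hω]
    push_cast
    field_simp
  rw [h1, Complex.exp_mul_I, ← Complex.ofReal_cos, ← Complex.ofReal_sin]

omit hT in
theorem fourier_neg_nat_coe (hω : ω = 2 * Real.pi / T) (hTpos : 0 < T) (n : ℕ) (t : ℝ) :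
    (fourier (-(n:ℤ)) ((t : ℝ) : AddCircle T) : ℂ)
      = ((Real.cos ((n:ℝ)*ω*t) : ℝ) : ℂ) - ((Real.sin ((n:ℝ)*ω*t) : ℝ) : ℂ) * Complex.I := by
  have h1 : (fourier (-(n:ℤ)) ((t:ℝ) : AddCircle T) : ℂ)
      = Complex.exp (((-((n:ℝ)*ω*t)) : ℝ) * Complex.I) := by
    rw [fourier_coe_apply]
    congr 1
    rw [hω]
    push_cast
    field_simp
  rw [h1, Complex.exp_mul_I, ← Complex.ofReal_cos, ← Complex.ofReal_sin, Real.cos_neg,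
    Real.sin_neg]
  push_cast
  ring

theorem partial_sum_eq (hω : ω = 2 * Real.pi / T) (hF : ∀ x : ℝ, F x = (f (s, x) : ℂ))
    (hgc : Continuous fun x : ℝ => f (s, x)) (N : ℕ) (t : ℝ) :
    ((fourierPartialSum T ω f N s t : ℝ) : ℂ)
      = ∑ n ∈ Finset.Icc (-(N:ℤ)) (N:ℤ),
          fourierCoeff (⇑F) n • (fourier n ((t:ℝ) : AddCircle T) : ℂ) := by
  have hTpos := hT.out
  induction N with
  | zero =>
    simp only [Nat.cast_zero, neg_zero, Finset.Icc_self, Finset.sum_singleton]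
    have hB0 : fourierB T ω f 0 s = 0 := by
      simp [fourierB]
    rw [show ((0:ℤ)) = ((0:ℕ):ℤ) by norm_num, coeff_plus hω hF hgc 0]
    rw [show ((fourier ((0:ℕ):ℤ) ((t:ℝ) : AddCircle T)) : ℂ) = 1 by simp [fourier_zero]]
    rw [fourierPartialSum]
    simp [hB0]
  | succ N ih =>
    have hicc : Finset.Icc (-((N:ℤ)+1)) ((N:ℤ)+1)
        = insert (-((N:ℤ)+1)) (insert (((N:ℤ)+1)) (Finset.Icc (-(N:ℤ)) (N:ℤ))) := by
      ext k
      simp only [Finset.mem_Icc, Finset.mem_insert]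
      omega
    have hn1 : (-((N:ℤ)+1)) ∉ insert (((N:ℤ)+1)) (Finset.Icc (-(N:ℤ)) (N:ℤ)) := by
      simp only [Finset.mem_insert, Finset.mem_Icc]
      omega
    have hn2 : (((N:ℤ)+1)) ∉ Finset.Icc (-(N:ℤ)) (N:ℤ) := by
      simp only [Finset.mem_Icc]
      omega
    push_cast
    rw [hicc, Finset.sum_insert hn1, Finset.sum_insert hn2, ← ih]
    rw [show (-((N:ℤ)+1)) = -(((N+1:ℕ)):ℤ) by push_cast; ring]
    rw [show (((N:ℤ)+1)) = (((N+1:ℕ)):ℤ) by push_cast; ring]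
    rw [coeff_plus hω hF hgc (N+1), coeff_neg hω hF hgc (N+1),
      fourier_nat_coe hω hTpos (N+1) t, fourier_neg_nat_coe hω hTpos (N+1) t]
    rw [fourierPartialSum, fourierPartialSum, Finset.sum_Icc_succ_top (by omega : 1 ≤ N+1)]
    simp only [smul_eq_mul]
    push_cast
    linear_combination (((fourierB T ω f (N+1) s : ℝ) : ℂ)
      * Complex.sin (((N:ℂ)+1) * (ω:ℂ) * (t:ℂ))) * Complex.I_sq
end Coeff

/-- Part 1 of the paper's Lemma 5 (scalar form): if `f(s, ·)` is `T`-periodic, jointly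
continuous, and Lipschitz in `t` uniformly over `s ∈ [s₀, s₁]`, then the Fourier partial
sums `S_N(s, t)` converge to `f(s, t)` uniformly in `(s, t) ∈ [s₀, s₁] × ℝ` as `N → ∞`. -/
theorem fourier_truncation_error_tendsto_uniformly
    (T : ℝ) (hT : 0 < T) (ω : ℝ) (hω : ω = 2 * Real.pi / T)
    (s₀ s₁ : ℝ) (hs : s₀ ≤ s₁)
    (f : ℝ × ℝ → ℝ) (hf : Continuous f)
    (hper : ∀ s t : ℝ, f (s, t + T) = f (s, t))
    (L : ℝ) (hL : 0 ≤ L)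
    (hLip : ∀ s ∈ Set.Icc s₀ s₁, ∀ t t' : ℝ, |f (s, t) - f (s, t')| ≤ L * |t - t'|) :
    ∀ ε > 0, ∃ N₀ : ℕ, ∀ N ≥ N₀, ∀ s ∈ Set.Icc s₀ s₁, ∀ t : ℝ,
      |fourierPartialSum T ω f N s t - f (s, t)| < ε := by
  haveI hfact : Fact (0 < T) := ⟨hT⟩
  intro ε hε
  obtain ⟨hr0, hr34⟩ := rconst_facts
  have hrlt1 : (Real.sqrt 2)⁻¹ < 1 := lt_of_le_of_lt hr34 (by norm_num)
  obtain ⟨J, hJ⟩ : ∃ J : ℕ, 2*L*T*((Real.sqrt 2)⁻¹)^J < ε := by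
    obtain ⟨J, hJ⟩ := exists_pow_lt_of_lt_one
      (show (0:ℝ) < ε/(2*L*T+1) by positivity) hrlt1
    refine ⟨J, ?_⟩
    have hpow0 : (0:ℝ) ≤ ((Real.sqrt 2)⁻¹)^J := pow_nonneg hr0 J
    have h1 : 2*L*T*((Real.sqrt 2)⁻¹)^J ≤ (2*L*T+1) * ((Real.sqrt 2)⁻¹)^J := by nlinarith
    have h2 : (2*L*T+1) * ((Real.sqrt 2)⁻¹)^J < (2*L*T+1) * (ε/(2*L*T+1)) :=
      mul_lt_mul_of_pos_left hJ (by positivity)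
    have h3 : (2*L*T+1) * (ε/(2*L*T+1)) = ε := by field_simp
    linarith
  refine ⟨2^J, fun N hN s hs t => ?_⟩
  have hgc : Continuous (fun x : ℝ => f (s, x)) :=
    hf.comp (continuous_const.prodMk continuous_id)
  have hper' : Function.Periodic (fun x : ℝ => f (s, x)) T := fun x => hper s x
  have hgcC : Continuous (fun x : ℝ => ((f (s, x) : ℝ) : ℂ)) :=
    Complex.continuous_ofReal.comp hgc
  set F : C(AddCircle T, ℂ) :=
    ⟨AddCircle.liftIco T 0 (fun x : ℝ => ((f (s, x) : ℝ) : ℂ)),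
      AddCircle.liftIco_continuous
        (by simpa using congrArg (fun y : ℝ => ((y : ℂ))) (hper' 0).symm)
        hgcC.continuousOn⟩ with hFdef
  have hF : ∀ x : ℝ, F ((x : ℝ) : AddCircle T) = ((f (s, x) : ℝ) : ℂ) := by
    intro x
    obtain ⟨b, hb, hbx⟩ := AddCircle.eq_coe_Ico ((x : ℝ) : AddCircle T)
    have hmem : b ∈ Set.Ico (0:ℝ) (0 + T) := by simpa using hb
    have h1 : F ((b : ℝ) : AddCircle T) = ((f (s, b) : ℝ) : ℂ) := by
      simp only [hFdef, ContinuousMap.coe_mk]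
      exact AddCircle.liftIco_coe_apply hmem
    have hsub : -b + x ∈ AddSubgroup.zmultiples T := QuotientAddGroup.eq.mp hbx
    obtain ⟨k, hk⟩ := AddSubgroup.mem_zmultiples_iff.mp hsub
    have hk' : (k:ℝ) * T = -b + x := by rw [← zsmul_eq_mul]; exact hk
    have hxbk : x = b + k • T := by rw [zsmul_eq_mul]; linarith
    have h2 : f (s, x) = f (s, b) := by
      rw [hxbk]
      exact (hper'.zsmul k) b
    rw [← hbx, h1, h2]
  have hg : ∀ t t' : ℝ, |f (s, t) - f (s, t')| ≤ L * |t - t'| := hLip s hs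
  have hps := partial_sum_eq hω hF hgc N t
  have key := partial_sum_error hF hL hg J N hN ((t : ℝ) : AddCircle T)
  calc |fourierPartialSum T ω f N s t - f (s, t)|
      = ‖((fourierPartialSum T ω f N s t - f (s, t) : ℝ) : ℂ)‖ := (Complex.norm_real _).symm
    _ = ‖(∑ n ∈ Finset.Icc (-(N:ℤ)) (N:ℤ),
          fourierCoeff (⇑F) n • (fourier n ((t:ℝ) : AddCircle T) : ℂ))
          - F ((t:ℝ) : AddCircle T)‖ := by
        rw [Complex.ofReal_sub, hps, hF t]
    _ ≤ 2 * L * T * ((Real.sqrt 2)⁻¹)^J := key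
    _ < ε := hJ
end
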